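/- arXiv:1604.06499 — 3 statements merged into one kernel-verified Lean document; each statement's English description precedes it below -/
import Mathlib

section
/- Let L be a full-rank lattice in ℝ³ that is preserved by every element of the octahedral group [3,4], i.e. by every signed permutation matrix. Then there exists a nonzero real number a such that a⁻¹L ∈ {Λ₍₁,₀,₀₎, Λ₍₁,₁,₁₎, Λ₍₁,₁,₀₎}. -/
noncomputable section

/-- `ℝ³`, as the space of triples of reals. -/
abbrev V3 := Fin 3 → ℝ

/-- A full-rank lattice in `ℝ³`. -/
def IsFullLattice (L : AddSubgroup V3) : Prop :=
  ∃ b : Module.Basis (Fin 3) ℝ V3,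
    ∀ x, x ∈ L ↔ ∃ c : Fin 3 → ℤ, x = ∑ i, (c i : ℝ) • b i

/-- `f` is the action of a signed permutation matrix: `(f x) i = ε i * x (σ i)` where
`σ` is a permutation of the coordinates and each `ε i` is `1` or `-1`.  The group of all
such maps is the octahedral group `[3,4] ≤ O(3)`. -/
def IsSignedPerm (f : V3 → V3) : Prop :=
  ∃ (σ : Equiv.Perm (Fin 3)) (ε : Fin 3 → ℝ),
    (∀ i, ε i = 1 ∨ ε i = -1) ∧ ∀ x i, f x i = ε i * x (σ i)

/-- The cubic lattice `Λ₍₁,₀,₀₎ = ℤ³`. -/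
def cubicLattice : Set V3 := {x | ∃ c : Fin 3 → ℤ, ∀ i, x i = c i}

/-- The body-centred cubic lattice `Λ₍₁,₁,₁₎`: integer vectors whose three coordinates
all have the same parity. -/
def bccLattice : Set V3 :=
  {x | ∃ c : Fin 3 → ℤ, (∀ i, x i = c i) ∧ ∀ i j, c i % 2 = c j % 2}

/-- The face-centred cubic lattice `Λ₍₁,₁,₀₎`: integer vectors whose coordinate sum is even. -/
def fccLattice : Set V3 :=
  {x | ∃ c : Fin 3 → ℤ, (∀ i, x i = c i) ∧ 2 ∣ (c 0 + c 1 + c 2)}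

namespace St8
variable {L : AddSubgroup V3}

lemma perm_mem (hpres : ∀ f : V3 → V3, IsSignedPerm f → f '' (L : Set V3) = (L : Set V3))
    (σ : Equiv.Perm (Fin 3)) {x : V3} (hx : x ∈ L) : (fun i => x (σ i)) ∈ L := by
  have h := hpres (fun x i => x (σ i))
    ⟨σ, fun _ => 1, fun i => Or.inl rfl, fun x i => (one_mul _).symm⟩
  have : (fun i => x (σ i)) ∈ (fun x : V3 => fun i => x (σ i)) '' (L : Set V3) :=
    ⟨x, hx, rfl⟩
  rwa [h] at this

lemma flip_mem (hpres : ∀ f : V3 → V3, IsSignedPerm f → f '' (L : Set V3) = (L : Set V3))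
    (ε : Fin 3 → ℝ) (hε : ∀ i, ε i = 1 ∨ ε i = -1) {x : V3} (hx : x ∈ L) :
    (fun i => ε i * x i) ∈ L := by
  have h := hpres (fun x i => ε i * x i) ⟨Equiv.refl _, ε, hε, fun x i => rfl⟩
  have : (fun i => ε i * x i) ∈ (fun x : V3 => fun i => ε i * x i) '' (L : Set V3) :=
    ⟨x, hx, rfl⟩
  rwa [h] at this

lemma axis_mem (hpres : ∀ f : V3 → V3, IsSignedPerm f → f '' (L : Set V3) = (L : Set V3))
    {x : V3} (hx : x ∈ L) (i : Fin 3) :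
    (fun j => if j = i then 2 * x i else 0) ∈ L := by
  set ε : Fin 3 → ℝ := fun j => if j = i then 1 else -1 with hεdef
  have hf : (fun j => ε j * x j) ∈ L :=
    flip_mem hpres ε (fun j => by by_cases h : j = i <;> simp [hεdef, h]) hx
  have hsum := L.add_mem hx hf
  have : (fun j => if j = i then 2 * x i else 0) = x + fun j => ε j * x j := by
    funext j
    by_cases h : j = i <;> simp [hεdef, h, Pi.add_apply] <;> ring
  rwa [this]

lemma axis_transfer {G : AddSubgroup V3}
    (hG : ∀ σ : Equiv.Perm (Fin 3), ∀ y ∈ G, (fun i => y (σ i)) ∈ G)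
    (t : ℝ) (i : Fin 3) :
    ((fun j => if j = i then t else 0) ∈ G) ↔ ((fun j => if j = 0 then t else 0) ∈ G) := by
  constructor
  · intro h
    have h2 := hG (Equiv.swap 0 i) _ h
    have : (fun j => if (Equiv.swap 0 i) j = i then t else 0)
        = (fun j : Fin 3 => if j = 0 then t else 0) := by
      funext j
      refine if_congr ?_ rfl rfl
      constructor
      · intro hj
        have := (Equiv.swap 0 i).injective (a₁ := j) (a₂ := 0)
        exact this (by rw [hj, Equiv.swap_apply_left])
      · rintro rfl; exact Equiv.swap_apply_left 0 i
    rwa [this] at h2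
  · intro h
    have h2 := hG (Equiv.swap 0 i) _ h
    have : (fun j => if (Equiv.swap 0 i) j = 0 then t else 0)
        = (fun j : Fin 3 => if j = i then t else 0) := by
      funext j
      refine if_congr ?_ rfl rfl
      constructor
      · intro hj
        have := (Equiv.swap 0 i).injective (a₁ := j) (a₂ := i)
        exact this (by rw [hj, Equiv.swap_apply_right])
      · intro hj; rw [hj]; exact Equiv.swap_apply_right 0 i
    rwa [this] at h2

lemma sum_axis (t : Fin 3 → ℝ) (g : Fin 3 → ℤ) :
    (∑ i, g i • fun j => if j = i then t i else 0 : V3) = fun j => (g j : ℝ) * t j := by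
  funext j
  simp [Finset.sum_apply, smul_ite, Finset.sum_ite_eq, zsmul_eq_mul]

lemma mem_iff_repr (b : Module.Basis (Fin 3) ℝ V3)
    (hb : ∀ x, x ∈ L ↔ ∃ c : Fin 3 → ℤ, x = ∑ i, (c i : ℝ) • b i) (x : V3) :
    x ∈ L ↔ ∀ i, ∃ n : ℤ, b.repr x i = n := by
  constructor
  · rintro hx i
    obtain ⟨c, rfl⟩ := (hb _).1 hx
    exact ⟨c i, congrFun (b.repr_sum_self _) i⟩
  · intro h
    choose c hc using h
    refine (hb _).2 ⟨c, ?_⟩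
    conv_lhs => rw [← b.sum_repr x]
    exact Finset.sum_congr rfl fun i _ => by rw [hc i]

lemma axis_cyclic (b : Module.Basis (Fin 3) ℝ V3)
    (hb : ∀ x, x ∈ L ↔ ∃ c : Fin 3 → ℤ, x = ∑ i, (c i : ℝ) • b i)
    {s₀ : ℝ} (hs₀ : s₀ ≠ 0) (hs₀L : (fun j : Fin 3 => if j = 0 then s₀ else 0) ∈ L) :
    ∃ c : ℝ, c ≠ 0 ∧
      ∀ t : ℝ, ((fun j : Fin 3 => if j = 0 then t else 0) ∈ L) ↔ ∃ k : ℤ, t = k * c := by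
  set e₀ : V3 := fun j => if j = 0 then (1:ℝ) else 0 with he₀
  have hax : ∀ t : ℝ, (fun j : Fin 3 => if j = 0 then t else 0) = t • e₀ := by
    intro t; funext j
    simp [he₀, Pi.smul_apply, smul_eq_mul, mul_ite]
  have he₀ne : e₀ ≠ 0 := by
    intro h
    have := congrFun h 0
    simp [he₀] at this
  have hrne : b.repr e₀ ≠ 0 := by
    intro h
    exact he₀ne (by simpa using (LinearEquiv.map_eq_zero_iff b.repr).1 h)
  obtain ⟨j0, hj0⟩ : ∃ j0, b.repr e₀ j0 ≠ 0 := by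
    by_contra h
    push_neg at h
    exact hrne (Finsupp.ext h)
  set r := b.repr e₀ j0 with hr
  have memT : ∀ t : ℝ, t • e₀ ∈ L → ∃ n : ℤ, t * r = n := by
    intro t ht
    obtain ⟨n, hn⟩ := (mem_iff_repr b hb _).1 ht j0
    refine ⟨n, ?_⟩
    rw [← hn, map_smul]
    simp [hr]
  let T : AddSubgroup ℤ :=
    { carrier := {n : ℤ | ((n : ℝ) / r) • e₀ ∈ L}
      add_mem' := by
        intro p q hp hq
        show (((p + q : ℤ) : ℝ) / r) • e₀ ∈ L
        have : (((p + q : ℤ) : ℝ) / r) • e₀ = ((p:ℝ)/r) • e₀ + ((q:ℝ)/r) • e₀ := by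
          push_cast; rw [add_div, add_smul]
        rw [this]; exact L.add_mem hp hq
      zero_mem' := by
        show (((0 : ℤ) : ℝ) / r) • e₀ ∈ L
        simpa using L.zero_mem
      neg_mem' := by
        intro p hp
        show (((-p : ℤ) : ℝ) / r) • e₀ ∈ L
        have : (((-p : ℤ) : ℝ) / r) • e₀ = -(((p:ℝ)/r) • e₀) := by
          push_cast; rw [neg_div, neg_smul]
        rw [this]; exact L.neg_mem hp }
  obtain ⟨g, hg⟩ := Int.subgroup_cyclic T
  have hmemT : ∀ n : ℤ, n ∈ T ↔ ∃ k : ℤ, k * g = n := by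
    intro n
    rw [hg, AddSubgroup.mem_closure_singleton]
    simp [smul_eq_mul]
  refine ⟨(g : ℝ) / r, ?_, ?_⟩
  · intro hc
    rw [hax] at hs₀L
    obtain ⟨n, hn⟩ := memT s₀ hs₀L
    have hnT : n ∈ T := by
      show ((n:ℝ)/r) • e₀ ∈ L
      have : (n:ℝ)/r = s₀ := by field_simp [hr] at hn ⊢; linarith [hn]
      rwa [this]
    obtain ⟨k, hk⟩ := (hmemT n).1 hnT
    have hg0 : (g : ℝ) = 0 := by
      have := div_eq_iff (hj0 : r ≠ 0) |>.1 hc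
      simpa using this
    have : (n : ℝ) = 0 := by
      rw [← hk]; push_cast; rw [hg0]; ring
    have hs0' : s₀ * r = 0 := by rw [hn, this]
    rcases mul_eq_zero.1 hs0' with h | h
    · exact hs₀ h
    · exact hj0 h
  · intro t
    rw [hax]
    constructor
    · intro ht
      obtain ⟨n, hn⟩ := memT t ht
      have hnT : n ∈ T := by
        show ((n:ℝ)/r) • e₀ ∈ L
        have : (n:ℝ)/r = t := by field_simp; linarith [hn]
        rwa [this]
      obtain ⟨k, hk⟩ := (hmemT n).1 hnT
      refine ⟨k, ?_⟩
      have ht' : t = (n : ℝ) / r := by field_simp; linarith [hn]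
      rw [ht', ← hk]
      push_cast
      ring
    · rintro ⟨k, rfl⟩
      have hgT : g ∈ T := (hmemT g).2 ⟨1, one_mul g⟩
      have hgL : ((g:ℝ)/r) • e₀ ∈ L := hgT
      have : ((k : ℝ) * ((g:ℝ)/r)) • e₀ = k • (((g:ℝ)/r) • e₀) := by
        rw [mul_smul, Int.cast_smul_eq_zsmul]
      rw [this]
      exact L.zsmul_mem hgL k

end St8

open St8

/-- A full-rank lattice in `ℝ³` preserved by every signed permutation
matrix (the octahedral group `[3,4]`) is, up to a nonzero scalar, one of the cubic,
body-centred cubic or face-centred cubic lattices. -/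
theorem statement8 (L : AddSubgroup V3) (hL : IsFullLattice L)
    (hpres : ∀ f : V3 → V3, IsSignedPerm f → f '' (L : Set V3) = (L : Set V3)) :
    ∃ a : ℝ, a ≠ 0 ∧
      (fun x : V3 => a⁻¹ • x) '' (L : Set V3) ∈
        ({cubicLattice, bccLattice, fccLattice} : Set (Set V3)) := by
  obtain ⟨b, hb⟩ := hL
  have hGperm : ∀ σ : Equiv.Perm (Fin 3), ∀ y ∈ L, (fun i => y (σ i)) ∈ L :=
    fun σ y hy => perm_mem hpres σ hy
  -- a nonzero axis element
  have hb0L : b 0 ∈ L := by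
    refine (hb _).2 ⟨fun i => if i = 0 then 1 else 0, ?_⟩
    simp [apply_ite (fun n : ℤ => (n : ℝ)), ite_smul, Finset.sum_ite_eq]
  obtain ⟨j, hj⟩ : ∃ j, b 0 j ≠ 0 := Function.ne_iff.1 (b.ne_zero 0)
  have hyL : (fun i => b 0 (Equiv.swap 0 j i)) ∈ L := hGperm _ _ hb0L
  have hy0 : b 0 (Equiv.swap 0 j 0) ≠ 0 := by rw [Equiv.swap_apply_left]; exact hj
  have hs₀L := axis_mem hpres hyL 0
  set s₀ : ℝ := 2 * b 0 (Equiv.swap 0 j 0) with hs₀def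
  have hs₀ : s₀ ≠ 0 := by
    simp only [hs₀def]
    exact mul_ne_zero two_ne_zero hy0
  obtain ⟨c, hc0, hS⟩ := axis_cyclic b hb hs₀ hs₀L
  -- the rescaled lattice M
  set a : ℝ := c / 2 with hadef
  have ha : a ≠ 0 := by simp [hadef]; exact hc0
  have hca : c = 2 * a := by rw [hadef]; ring
  set M : AddSubgroup V3 := L.comap (DistribMulAction.toAddMonoidHom V3 a) with hMdef
  have hMmem : ∀ y : V3, y ∈ M ↔ a • y ∈ L := fun y => Iff.rfl
  have himg : ∀ s : ℝ, s ≠ 0 →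
      (fun x : V3 => s⁻¹ • x) '' (L : Set V3) = {y : V3 | s • y ∈ L} := by
    intro s hs
    ext y
    constructor
    · rintro ⟨x, hx, rfl⟩
      show s • s⁻¹ • x ∈ L
      rwa [smul_inv_smul₀ hs]
    · intro h
      exact ⟨s • y, h, inv_smul_smul₀ hs y⟩
  have hMperm : ∀ σ : Equiv.Perm (Fin 3), ∀ y ∈ M, (fun i => y (σ i)) ∈ M := by
    intro σ y hy
    have h1 := hGperm σ _ ((hMmem y).1 hy)
    refine (hMmem _).2 ?_
    have : a • (fun i => y (σ i)) = fun i => (a • y) (σ i) := by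
      funext i; simp
    rw [this]
    exact h1
  -- all coordinates of elements of M are integers
  have hMint : ∀ y ∈ M, ∀ i, ∃ n : ℤ, y i = n := by
    intro y hy i
    have hx : a • y ∈ L := (hMmem y).1 hy
    have h1 := axis_mem hpres hx i
    have h2 := (axis_transfer hGperm _ i).1 h1
    obtain ⟨k, hk⟩ := (hS _).1 h2
    refine ⟨k, ?_⟩
    have hxi : (a • y) i = a * y i := rfl
    rw [hxi] at hk
    have h2a : (2 : ℝ) * a ≠ 0 := mul_ne_zero two_ne_zero ha
    have : (2 * a) * y i = (2 * a) * k := by rw [hca] at hk; linarith [hk]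
    exact mul_left_cancel₀ h2a this
  -- the doubled standard vectors are in M
  have hM2e : ∀ i : Fin 3, (fun j => if j = i then (2:ℝ) else 0) ∈ M := by
    intro i
    refine (hMmem _).2 ?_
    have h1 : (fun j : Fin 3 => if j = 0 then c else 0) ∈ L := (hS c).2 ⟨1, by ring⟩
    have h2 := (axis_transfer hGperm c i).2 h1
    have : a • (fun j => if j = i then (2:ℝ) else 0) = fun j => if j = i then c else 0 := by
      funext j
      simp [Pi.smul_apply, smul_eq_mul, mul_ite, hca]
      ring_nf
    rw [this]
    exact h2
  have hMeven : ∀ d : Fin 3 → ℤ, (fun i => ((2 * d i : ℤ) : ℝ)) ∈ M := by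
    intro d
    have h2 : (fun i : Fin 3 => ((2 * d i : ℤ):ℝ))
        = ∑ i, d i • (fun j => if j = i then (2:ℝ) else 0) := by
      rw [sum_axis (fun _ => (2:ℝ)) d]
      funext j; push_cast; ring
    rw [h2]
    exact AddSubgroup.sum_mem M fun i _ => AddSubgroup.zsmul_mem M (hM2e i) (d i)
  -- parity reduction
  have hMpar : ∀ (y : V3) (cc : Fin 3 → ℤ), (∀ i, y i = cc i) →
      (y ∈ M ↔ (fun i => ((cc i % 2 : ℤ) : ℝ)) ∈ M) := by
    intro y cc hy
    have hsplit : y = (fun i => ((cc i % 2 : ℤ):ℝ)) + (fun i => ((2 * (cc i / 2) : ℤ):ℝ)) := by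
      funext i
      rw [Pi.add_apply, hy i]
      have h : cc i = cc i % 2 + 2 * (cc i / 2) := by omega
      exact_mod_cast congrArg (fun n : ℤ => (n : ℝ)) h
    constructor
    · intro hyM
      have := M.sub_mem hyM (hMeven (fun i => cc i / 2))
      have heq : y - (fun i => ((2 * (cc i / 2) : ℤ):ℝ)) = fun i => ((cc i % 2 : ℤ):ℝ) := by
        rw [hsplit]; funext i; simp
      rwa [heq] at this
    · intro hp
      rw [hsplit]
      exact M.add_mem hp (hMeven _)
  -- the three key pattern vectors
  set PAv : V3 := fun j => if j = 0 then (1:ℝ) else 0 with hPAv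
  set PBv : V3 := fun j => if j = 2 then (0:ℝ) else 1 with hPBv
  set PCv : V3 := fun _ => (1:ℝ) with hPCv
  have patclass : ∀ cc : Fin 3 → ℤ, (fun i => ((cc i % 2 : ℤ):ℝ)) ∈ M →
      (∀ i, cc i % 2 = 0) ∨ ((∀ i, cc i % 2 = 1) ∧ PCv ∈ M) ∨ PAv ∈ M ∨
      (PBv ∈ M ∧ (cc 0 + cc 1 + cc 2) % 2 = 0) := by
    intro cc hp
    rcases Int.emod_two_eq (cc 0) with h0 | h0 <;>
    rcases Int.emod_two_eq (cc 1) with h1 | h1 <;>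
    rcases Int.emod_two_eq (cc 2) with h2 | h2
    · left; intro i; fin_cases i <;> assumption
    · right; right; left
      have hq := hMperm (Equiv.swap 0 2) _ hp
      have heq : (fun i : Fin 3 => ((cc (Equiv.swap 0 2 i) % 2 : ℤ):ℝ)) = PAv := by
        funext i; fin_cases i <;> simp [Equiv.swap_apply_def, hPAv, h0, h1, h2]
      rwa [heq] at hq
    · right; right; left
      have hq := hMperm (Equiv.swap 0 1) _ hp
      have heq : (fun i : Fin 3 => ((cc (Equiv.swap 0 1 i) % 2 : ℤ):ℝ)) = PAv := by
        funext i; fin_cases i <;> simp [Equiv.swap_apply_def, hPAv, h0, h1, h2]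
      rwa [heq] at hq
    · right; right; right
      refine ⟨?_, by omega⟩
      have hq := hMperm (Equiv.swap 0 2) _ hp
      have heq : (fun i : Fin 3 => ((cc (Equiv.swap 0 2 i) % 2 : ℤ):ℝ)) = PBv := by
        funext i; fin_cases i <;> simp [Equiv.swap_apply_def, hPBv, h0, h1, h2]
      rwa [heq] at hq
    · right; right; left
      have heq : (fun i : Fin 3 => ((cc i % 2 : ℤ):ℝ)) = PAv := by
        funext i; fin_cases i <;> simp [hPAv, h0, h1, h2]
      rwa [heq] at hp
    · right; right; right
      refine ⟨?_, by omega⟩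
      have hq := hMperm (Equiv.swap 1 2) _ hp
      have heq : (fun i : Fin 3 => ((cc (Equiv.swap 1 2 i) % 2 : ℤ):ℝ)) = PBv := by
        funext i; fin_cases i <;> simp [Equiv.swap_apply_def, hPBv, h0, h1, h2]
      rwa [heq] at hq
    · right; right; right
      refine ⟨?_, by omega⟩
      have heq : (fun i : Fin 3 => ((cc i % 2 : ℤ):ℝ)) = PBv := by
        funext i; fin_cases i <;> simp [hPBv, h0, h1, h2]
      rwa [heq] at hp
    · right; left
      refine ⟨fun i => by fin_cases i <;> assumption, ?_⟩
      have heq : (fun i : Fin 3 => ((cc i % 2 : ℤ):ℝ)) = PCv := by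
        funext i; fin_cases i <;> simp [hPCv, h0, h1, h2]
      rwa [heq] at hp
  -- final case analysis
  by_cases hA : PAv ∈ M
  · -- cubic, scalar a
    refine ⟨a, ha, ?_⟩
    have hMcub : {y : V3 | a • y ∈ L} = cubicLattice := by
      ext y
      constructor
      · intro hy
        choose cc hcc using hMint y ((hMmem y).2 hy)
        exact ⟨cc, hcc⟩
      · rintro ⟨cc, hcc⟩
        show a • y ∈ L
        have haxes : ∀ i : Fin 3, (fun j => if j = i then (1:ℝ) else 0) ∈ M :=
          fun i => (axis_transfer hMperm 1 i).2 hA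
        have hrep : y = ∑ i, cc i • (fun j => if j = i then (1:ℝ) else 0) := by
          rw [sum_axis (fun _ => (1:ℝ)) cc]
          funext j2; rw [hcc j2]; ring
        have hyM : y ∈ M := by
          rw [hrep]
          exact AddSubgroup.sum_mem M fun i _ => AddSubgroup.zsmul_mem M (haxes i) (cc i)
        exact (hMmem y).1 hyM
    rw [himg a ha, hMcub]
    exact Set.mem_insert _ _
  by_cases hB : PBv ∈ M
  · -- fcc, scalar a
    refine ⟨a, ha, ?_⟩
    have hMfcc : {y : V3 | a • y ∈ L} = fccLattice := by
      ext y
      constructor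
      · intro hy
        have hyM : y ∈ M := (hMmem y).2 hy
        choose cc hcc using hMint y hyM
        refine ⟨cc, hcc, ?_⟩
        have hp := (hMpar y cc hcc).1 hyM
        rcases patclass cc hp with h | ⟨h, hCC⟩ | h | ⟨_, h⟩
        · have e0 := h 0; have e1 := h 1; have e2 := h 2; omega
        · exfalso
          have hD := M.sub_mem hCC hB
          have heq : PCv - PBv = fun j : Fin 3 => if j = 2 then (1:ℝ) else 0 := by
            funext i; fin_cases i <;> simp [hPCv, hPBv]
          rw [heq] at hD
          exact hA ((axis_transfer hMperm 1 2).1 hD)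
        · exact absurd h hA
        · omega
      · rintro ⟨cc, hcc, hsum⟩
        show a • y ∈ L
        refine (hMmem y).1 ((hMpar y cc hcc).2 ?_)
        rcases Int.emod_two_eq (cc 0) with h0 | h0 <;>
        rcases Int.emod_two_eq (cc 1) with h1 | h1 <;>
        rcases Int.emod_two_eq (cc 2) with h2 | h2
        · have heq : (fun i : Fin 3 => ((cc i % 2 : ℤ):ℝ)) = 0 := by
            funext i; fin_cases i <;> simp [h0, h1, h2]
          rw [heq]; exact M.zero_mem
        · omega
        · omega
        · have hq := hMperm (Equiv.swap 0 2) _ hB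
          have heq : (fun i : Fin 3 => PBv (Equiv.swap 0 2 i)) = fun i : Fin 3 => ((cc i % 2 : ℤ):ℝ) := by
            funext i; fin_cases i <;> simp [Equiv.swap_apply_def, hPBv, h0, h1, h2]
          rwa [heq] at hq
        · omega
        · have hq := hMperm (Equiv.swap 1 2) _ hB
          have heq : (fun i : Fin 3 => PBv (Equiv.swap 1 2 i)) = fun i : Fin 3 => ((cc i % 2 : ℤ):ℝ) := by
            funext i; fin_cases i <;> simp [Equiv.swap_apply_def, hPBv, h0, h1, h2]
          rwa [heq] at hq
        · have heq : PBv = fun i : Fin 3 => ((cc i % 2 : ℤ):ℝ) := by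
            funext i; fin_cases i <;> simp [hPBv, h0, h1, h2]
          rwa [heq] at hB
        · omega
    rw [himg a ha, hMfcc]
    exact Set.mem_insert_iff.2 (Or.inr (Set.mem_insert_iff.2 (Or.inr rfl)))
  by_cases hC : PCv ∈ M
  · -- bcc, scalar a
    refine ⟨a, ha, ?_⟩
    have hMbcc : {y : V3 | a • y ∈ L} = bccLattice := by
      ext y
      constructor
      · intro hy
        have hyM : y ∈ M := (hMmem y).2 hy
        choose cc hcc using hMint y hyM
        refine ⟨cc, hcc, ?_⟩
        have hp := (hMpar y cc hcc).1 hyM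
        rcases patclass cc hp with h | ⟨h, _⟩ | h | ⟨h, _⟩
        · intro i j2; rw [h i, h j2]
        · intro i j2; rw [h i, h j2]
        · exact absurd h hA
        · exact absurd h hB
      · rintro ⟨cc, hcc, hall⟩
        show a • y ∈ L
        refine (hMmem y).1 ((hMpar y cc hcc).2 ?_)
        rcases Int.emod_two_eq (cc 0) with h0 | h0
        · have h1 : cc 1 % 2 = 0 := by rw [hall 1 0]; exact h0
          have h2 : cc 2 % 2 = 0 := by rw [hall 2 0]; exact h0
          have heq : (fun i : Fin 3 => ((cc i % 2 : ℤ):ℝ)) = 0 := by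
            funext i; fin_cases i <;> simp [h0, h1, h2]
          rw [heq]; exact M.zero_mem
        · have h1 : cc 1 % 2 = 1 := by rw [hall 1 0]; exact h0
          have h2 : cc 2 % 2 = 1 := by rw [hall 2 0]; exact h0
          have heq : PCv = fun i : Fin 3 => ((cc i % 2 : ℤ):ℝ) := by
            funext i; fin_cases i <;> simp [hPCv, h0, h1, h2]
          rwa [heq] at hC
    rw [himg a ha, hMbcc]
    exact Set.mem_insert_iff.2 (Or.inr (Set.mem_insert _ _))
  · -- M = 2ℤ³: cubic, scalar 2a
    have h2a : (2 : ℝ) * a ≠ 0 := mul_ne_zero two_ne_zero ha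
    refine ⟨2 * a, h2a, ?_⟩
    have heq2 : {y : V3 | (2 * a) • y ∈ L} = cubicLattice := by
      ext y
      constructor
      · intro hy
        have h2y : ((2:ℝ) • y) ∈ M := by
          refine (hMmem _).2 ?_
          have hss : a • ((2:ℝ) • y) = (2 * a) • y := by
            rw [smul_smul, mul_comm]
          rwa [hss]
        choose nn hnn using hMint _ h2y
        have hp := (hMpar _ nn hnn).1 h2y
        have hev : ∀ i, nn i % 2 = 0 := by
          rcases patclass nn hp with h | ⟨h, hCC⟩ | h | ⟨h, _⟩
          · exact h
          · exact absurd hCC hC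
          · exact absurd h hA
          · exact absurd h hB
        refine ⟨fun i => nn i / 2, fun i => ?_⟩
        have hni : ((2:ℝ) • y) i = 2 * y i := by
          simp [Pi.smul_apply]
        have hti : 2 * y i = (nn i : ℝ) := by rw [← hni]; exact hnn i
        have hcast : (nn i : ℝ) = 2 * ((nn i / 2 : ℤ) : ℝ) := by
          have hzz : nn i = 2 * (nn i / 2) := by have := hev i; omega
          exact_mod_cast congrArg (fun n : ℤ => (n:ℝ)) hzz
        have : 2 * y i = 2 * ((nn i / 2 : ℤ):ℝ) := by rw [hti, hcast]
        linarith
      · rintro ⟨cc, hcc⟩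
        show (2 * a) • y ∈ L
        have h2y : ((2:ℝ) • y) ∈ M := by
          have heq : ((2:ℝ) • y) = fun i => ((2 * cc i : ℤ):ℝ) := by
            funext i
            rw [Pi.smul_apply, smul_eq_mul, hcc i]
            push_cast; ring
          rw [heq]; exact hMeven cc
        have hss : a • ((2:ℝ) • y) = (2 * a) • y := by
          rw [smul_smul, mul_comm]
        rw [← hss]
        exact (hMmem _).1 h2y
    rw [himg _ h2a, heq2]
    exact Set.mem_insert _ _

end
end

section
/- Let L be a full-rank lattice in ℝ³ that is preserved by both the reflection in the plane x = 0 and the reflection in the plane y = 0 (the group D̃₂). Then there exists an invertible diagonal linear map D of ℝ³ such that D⁻¹(L) is one of the following six lattices: Λ₍₁,₀,₀₎ = ℤ³; Λ₍₁,₁,₁₎ (body-centred cubic); Λ₍₁,₁,₀₎ (face-centred cubic); the lattice ℤ(1,1,0) + ℤ(1,−1,0) + ℤ(0,0,1); the lattice ℤ(2,0,0) + ℤ(0,2,0) + ℤ(1,0,1); and the lattice ℤ(2,0,0) + ℤ(0,2,0) + ℤ(0,1,1). -/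
noncomputable section

/-- The lattice generated by three given vectors. -/
def latticeOf (v₁ v₂ v₃ : V3) : Set V3 :=
  {x | ∃ a b c : ℤ, x = a • v₁ + b • v₂ + c • v₃}

/- ## Auxiliary machinery -/

def axisv (i : Fin 3) (t : ℝ) : V3 := fun j => if j = i then t else 0

section Infra
variable (L : AddSubgroup V3) (a : Fin 3 → ℝ)

structure Setup : Prop where
  ha : ∀ i, a i ≠ 0
  hg : ∀ m : Fin 3 → ℤ, (fun j => (m j : ℝ) * a j) ∈ L
  hco : ∀ v ∈ L, ∃ c : Fin 3 → ℤ, ∀ j, 2 * v j = (c j : ℝ) * a j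
  hmin : ∀ (i : Fin 3) (n : ℤ), n % 2 = 1 → axisv i ((n : ℝ) * (a i / 2)) ∉ L

variable {L a}

lemma Setup.excl (S : Setup L a) (v : V3) (hv : v ∈ L) (c : Fin 3 → ℤ)
    (hc : ∀ j, 2 * v j = (c j : ℝ) * a j) (i : Fin 3) (hodd : c i % 2 = 1)
    (heven : ∀ j, j ≠ i → c j % 2 = 0) : False := by
  set m : Fin 3 → ℤ := fun j => if j = i then 0 else c j / 2 with hm
  have hmem := S.hg m
  have key : v - (fun j => (m j : ℝ) * a j) = axisv i ((c i : ℝ) * (a i / 2)) := by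
    funext j
    simp only [Pi.sub_apply, axisv, hm]
    by_cases hji : j = i
    · subst hji
      simp only [if_pos rfl]
      have := hc j
      push_cast
      linarith
    · simp only [if_neg hji]
      have h2 : c j = 2 * (c j / 2) := by have := heven j hji; omega
      have h2' : (c j : ℝ) = 2 * ((c j / 2 : ℤ) : ℝ) := by exact_mod_cast h2
      have h3 := hc j
      rw [h2'] at h3
      linarith
  exact S.hmin i (c i) hodd (key ▸ sub_mem hv hmem)

lemma Setup.excl3 (S : Setup L a) (v : V3) (hv : v ∈ L) (c : Fin 3 → ℤ)
    (hc : ∀ j, 2 * v j = (c j : ℝ) * a j)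
    (h : c 0 % 2 + c 1 % 2 + c 2 % 2 = 1) : False := by
  rcases Int.emod_two_eq (c 0) with h0 | h0 <;> rcases Int.emod_two_eq (c 1) with h1 | h1 <;>
    rcases Int.emod_two_eq (c 2) with h2 | h2
  · omega
  · exact S.excl v hv c hc 2 h2 (by intro j hj; fin_cases j <;> simp_all)
  · exact S.excl v hv c hc 1 h1 (by intro j hj; fin_cases j <;> simp_all)
  · omega
  · exact S.excl v hv c hc 0 h0 (by intro j hj; fin_cases j <;> simp_all)
  · omega
  · omega
  · omega

lemma mem_half (hg : ∀ m : Fin 3 → ℤ, (fun j => (m j : ℝ) * a j) ∈ L)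
    (c cw : Fin 3 → ℤ) (w : V3) (hw : w ∈ L)
    (hcw : ∀ j, 2 * w j = (cw j : ℝ) * a j) (hpar : ∀ j, c j % 2 = cw j % 2) :
    (fun j => (c j : ℝ) * (a j / 2)) ∈ L := by
  have hm : ∀ j, ∃ m : ℤ, c j = cw j + 2 * m := fun j => ⟨(c j - cw j) / 2, by have := hpar j; omega⟩
  choose m hm using hm
  have key : (fun j => (c j : ℝ) * (a j / 2)) = w + fun j => (m j : ℝ) * a j := by
    funext j
    have h1 := hcw j
    have h2' : (c j : ℝ) = cw j + 2 * m j := by exact_mod_cast hm j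
    simp only [Pi.add_apply]
    rw [h2']; ring_nf; linarith
  rw [key]; exact add_mem hw (hg m)

lemma master (d : Fin 3 → ℝ) (P : (Fin 3 → ℤ) → Prop)
    (hfwd : ∀ x : V3, (fun i => d i * x i) ∈ L → ∃ c : Fin 3 → ℤ, (∀ i, x i = (c i : ℝ)) ∧ P c)
    (hbwd : ∀ c : Fin 3 → ℤ, P c → (fun i : Fin 3 => d i * (c i : ℝ)) ∈ L) :
    (fun x : V3 => fun i => d i * x i) ⁻¹' (L : Set V3)
      = {x : V3 | ∃ c : Fin 3 → ℤ, (∀ i, x i = (c i : ℝ)) ∧ P c} := by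
  ext x
  simp only [Set.mem_preimage, SetLike.mem_coe, Set.mem_setOf_eq]
  constructor
  · exact hfwd x
  · rintro ⟨c, hc, hP⟩
    have := hbwd c hP
    have key : (fun i => d i * x i) = (fun i : Fin 3 => d i * (c i : ℝ)) := by
      funext i; rw [hc i]
    rw [key]; exact this

lemma coords_sub {v w : V3} {c cw : Fin 3 → ℤ}
    (hc : ∀ j, 2 * v j = (c j : ℝ) * a j) (hcw : ∀ j, 2 * w j = (cw j : ℝ) * a j) :
    ∀ j, 2 * (v - w) j = (((fun j => c j - cw j) j : ℤ) : ℝ) * a j := by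
  intro j
  simp only [Pi.sub_apply]
  push_cast
  linear_combination hc j - hcw j

lemma half_cancel {aa x : ℝ} {c : ℤ} (h0 : aa ≠ 0) (h : 2 * (aa / 2 * x) = (c : ℝ) * aa) :
    x = (c : ℝ) := by
  have h2 : aa * x = aa * (c : ℝ) := by linear_combination h
  exact mul_left_cancel₀ h0 h2

lemma one_cancel {aa x : ℝ} {c : ℤ} (h0 : aa ≠ 0) (h : 2 * (aa * x) = (c : ℝ) * aa)
    (he : c % 2 = 0) : x = ((c / 2 : ℤ) : ℝ) := by
  have h2 : aa * (2 * x) = aa * (c : ℝ) := by linear_combination h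
  have h3 : 2 * x = (c : ℝ) := mul_left_cancel₀ h0 h2
  have h4 : (c : ℝ) = 2 * ((c / 2 : ℤ) : ℝ) := by exact_mod_cast (by omega : c = 2 * (c / 2))
  linarith

lemma coords_eq (hane : ∀ i, a i ≠ 0) {x : V3} {c : Fin 3 → ℤ}
    (hc : ∀ j, 2 * (a j / 2 * x j) = (c j : ℝ) * a j) : ∀ i, x i = (c i : ℝ) :=
  fun i => half_cancel (hane i) (hc i)

lemma zero_coords : ∀ j, 2 * (0 : V3) j = (((0 : Fin 3 → ℤ) j : ℤ) : ℝ) * a j := by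
  intro j; simp

end Infra

lemma cubic_eq' : {x : V3 | ∃ c : Fin 3 → ℤ, (∀ i, x i = (c i : ℝ)) ∧ True} = cubicLattice := by
  ext x; simp [cubicLattice]

lemma bcc_eq' : {x : V3 | ∃ c : Fin 3 → ℤ, (∀ i, x i = (c i : ℝ)) ∧ ∀ i j, c i % 2 = c j % 2}
    = bccLattice := rfl

lemma fcc_eq' : {x : V3 | ∃ c : Fin 3 → ℤ, (∀ i, x i = (c i : ℝ)) ∧ 2 ∣ (c 0 + c 1 + c 2)}
    = fccLattice := rfl

lemma lat4_eq : {x : V3 | ∃ c : Fin 3 → ℤ, (∀ i, x i = (c i : ℝ)) ∧ c 0 % 2 = c 1 % 2}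
    = latticeOf ![1, 1, 0] ![1, -1, 0] ![0, 0, 1] := by
  ext x
  simp only [latticeOf, Set.mem_setOf_eq]
  constructor
  · rintro ⟨c, hc, hp⟩
    refine ⟨(c 0 + c 1) / 2, (c 0 - c 1) / 2, c 2, ?_⟩
    have e1 : (c 0 + c 1) / 2 + (c 0 - c 1) / 2 = c 0 := by omega
    have e2 : (c 0 + c 1) / 2 - (c 0 - c 1) / 2 = c 1 := by omega
    funext i
    fin_cases i <;> rw [hc] <;> simp <;> norm_cast <;> omega
  · rintro ⟨p, q, r, rfl⟩
    refine ⟨![p + q, p - q, r], ?_, by simp; omega⟩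
    intro i
    fin_cases i <;> simp <;> push_cast <;> ring

lemma lat5_eq : {x : V3 | ∃ c : Fin 3 → ℤ, (∀ i, x i = (c i : ℝ)) ∧ (c 1 % 2 = 0 ∧ c 0 % 2 = c 2 % 2)}
    = latticeOf ![2, 0, 0] ![0, 2, 0] ![1, 0, 1] := by
  ext x
  simp only [latticeOf, Set.mem_setOf_eq]
  constructor
  · rintro ⟨c, hc, hp1, hp2⟩
    refine ⟨(c 0 - c 2) / 2, c 1 / 2, c 2, ?_⟩
    have e1 : 2 * ((c 0 - c 2) / 2) + c 2 = c 0 := by omega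
    have e2 : 2 * (c 1 / 2) = c 1 := by omega
    funext i
    fin_cases i <;> rw [hc] <;> simp <;> norm_cast <;> omega
  · rintro ⟨p, q, r, rfl⟩
    refine ⟨![2 * p + r, 2 * q, r], ?_, by constructor <;> simp <;> omega⟩
    intro i
    fin_cases i <;> simp <;> push_cast <;> ring

lemma lat6_eq : {x : V3 | ∃ c : Fin 3 → ℤ, (∀ i, x i = (c i : ℝ)) ∧ (c 0 % 2 = 0 ∧ c 1 % 2 = c 2 % 2)}
    = latticeOf ![2, 0, 0] ![0, 2, 0] ![0, 1, 1] := by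
  ext x
  simp only [latticeOf, Set.mem_setOf_eq]
  constructor
  · rintro ⟨c, hc, hp1, hp2⟩
    refine ⟨c 0 / 2, (c 1 - c 2) / 2, c 2, ?_⟩
    have e1 : 2 * (c 0 / 2) = c 0 := by omega
    have e2 : 2 * ((c 1 - c 2) / 2) + c 2 = c 1 := by omega
    funext i
    fin_cases i <;> rw [hc] <;> simp <;> norm_cast <;> omega
  · rintro ⟨p, q, r, rfl⟩
    refine ⟨![2 * p, 2 * q + r, r], ?_, by constructor <;> simp <;> omega⟩
    intro i
    fin_cases i <;> simp <;> push_cast <;> ring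


lemma exists_gen (L : AddSubgroup V3) (hL : IsFullLattice L)
    (hx : (fun x : V3 => ![-(x 0), x 1, x 2]) '' (L : Set V3) = (L : Set V3))
    (hy : (fun x : V3 => ![x 0, -(x 1), x 2]) '' (L : Set V3) = (L : Set V3)) :
    ∃ a : Fin 3 → ℝ, (∀ i, a i ≠ 0) ∧ (∀ i, axisv i (a i) ∈ L) ∧
      (∀ i t, axisv i t ∈ L → ∃ n : ℤ, t = n * a i) ∧
      (∀ v ∈ L, ∀ i, axisv i (2 * v i) ∈ L) := by
  obtain ⟨b, hb⟩ := hL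
  -- reflections preserve L
  have hσx : ∀ v ∈ L, ![-(v 0), v 1, v 2] ∈ L := by
    intro v hv
    have : ![-(v 0), v 1, v 2] ∈ (fun x : V3 => ![-(x 0), x 1, x 2]) '' (L : Set V3) :=
      ⟨v, hv, rfl⟩
    rw [hx] at this; exact this
  have hσy : ∀ v ∈ L, ![v 0, -(v 1), v 2] ∈ L := by
    intro v hv
    have : ![v 0, -(v 1), v 2] ∈ (fun x : V3 => ![x 0, -(x 1), x 2]) '' (L : Set V3) :=
      ⟨v, hv, rfl⟩
    rw [hy] at this; exact this
  -- axis lemma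
  have hax : ∀ v ∈ L, ∀ i, axisv i (2 * v i) ∈ L := by
    intro v hv i
    fin_cases i
    · show axisv 0 (2 * v 0) ∈ L
      have h1 := hσx v hv
      have key : axisv 0 (2 * v 0) = v - ![-(v 0), v 1, v 2] := by
        funext j; fin_cases j <;> simp [axisv] <;> ring
      rw [key]; exact sub_mem hv h1
    · show axisv 1 (2 * v 1) ∈ L
      have h1 := hσy v hv
      have key : axisv 1 (2 * v 1) = v - ![v 0, -(v 1), v 2] := by
        funext j; fin_cases j <;> simp [axisv] <;> ring
      rw [key]; exact sub_mem hv h1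
    · show axisv 2 (2 * v 2) ∈ L
      have h1 := hσx v hv
      have h2 := hσy _ h1
      simp only [Matrix.cons_val_zero, Matrix.cons_val_one, Matrix.head_cons,
        Matrix.cons_val_two, Matrix.tail_cons] at h2
      have key : axisv 2 (2 * v 2) = v + ![-(v 0), -(v 1), v 2] := by
        funext j; fin_cases j <;> simp [axisv] <;> ring
      rw [key]; exact add_mem hv h2
  -- basis vectors in L
  have hbL : ∀ k, b k ∈ L := by
    intro k
    rw [hb]
    have hsum : ∑ j, ((if j = k then (1:ℤ) else 0 : ℤ) : ℝ) • b j = b k := by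
      rw [Finset.sum_eq_single k]
      · simp
      · intro j _ hj; simp [hj]
      · intro h; exact absurd (Finset.mem_univ k) h
    exact ⟨fun j => if j = k then 1 else 0, hsum.symm⟩
  -- for each i there is v in L with v i ≠ 0
  have hnz : ∀ i, ∃ v ∈ L, v i ≠ 0 := by
    intro i
    by_contra hcon
    push_neg at hcon
    have hk : ∀ k, b k i = 0 := fun k => hcon (b k) (hbL k)
    have hspan : ⊤ ≤ LinearMap.ker (LinearMap.proj (R := ℝ) (φ := fun _ : Fin 3 => ℝ) i) := by
      rw [← b.span_eq]
      rw [Submodule.span_le]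
      rintro x ⟨k, rfl⟩
      simp [LinearMap.mem_ker, hk k]
    have := hspan (Submodule.mem_top (x := axisv i 1))
    simp [LinearMap.mem_ker, axisv] at this
  -- generator per axis
  have key : ∀ i, ∃ ai : ℝ, ai ≠ 0 ∧ axisv i ai ∈ L ∧ ∀ t, axisv i t ∈ L → ∃ n : ℤ, t = n * ai := by
    intro i
    have hu : axisv i 1 ≠ 0 := by
      intro h
      have := congrFun h i
      simp [axisv] at this
    have hrepr : b.repr (axisv i 1) ≠ 0 := by
      intro h
      apply hu
      exact b.repr.injective (show b.repr (axisv i 1) = b.repr 0 by simpa using h)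
    obtain ⟨j₀, hj₀⟩ := Finsupp.ne_iff.mp hrepr
    simp only [Finsupp.coe_zero, Pi.zero_apply] at hj₀
    set r := b.repr (axisv i 1) j₀ with hr
    have hsmul : ∀ t : ℝ, axisv i t = t • axisv i 1 := by
      intro t; funext j; simp [axisv, mul_ite]
    have hint : ∀ t, axisv i t ∈ L → ∃ n : ℤ, t * r = n := by
      intro t ht
      rw [hb] at ht
      obtain ⟨c, hc⟩ := ht
      refine ⟨c j₀, ?_⟩
      have h1 : b.repr (axisv i t) j₀ = t * r := by
        rw [hsmul t, map_smul]; simp [hr]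
      have h2 : b.repr (axisv i t) j₀ = (c j₀ : ℝ) := by
        rw [hc]
        exact congrFun (Module.Basis.repr_sum_self b fun k => (c k : ℝ)) j₀
      rw [← h1, h2]
    -- the subgroup K of ℤ
    set K : AddSubgroup ℤ :=
      { carrier := {n : ℤ | axisv i ((n : ℝ) / r) ∈ L}
        zero_mem' := by
          show axisv i (((0:ℤ) : ℝ) / r) ∈ L
          have h0 : axisv i (((0:ℤ) : ℝ) / r) = 0 := by funext j; simp [axisv]
          rw [h0]; exact zero_mem L
        add_mem' := by
          intro p q hp hq
          simp only [Set.mem_setOf_eq] at *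
          have : axisv i (((p + q : ℤ) : ℝ) / r) = axisv i ((p : ℝ) / r) + axisv i ((q : ℝ) / r) := by
            funext j; by_cases hj : j = i <;> simp [axisv, hj] <;> push_cast <;> ring
          rw [this]; exact add_mem hp hq
        neg_mem' := by
          intro p hp
          simp only [Set.mem_setOf_eq] at *
          have : axisv i (((-p : ℤ) : ℝ) / r) = - axisv i ((p : ℝ) / r) := by
            funext j; by_cases hj : j = i <;> simp [axisv, hj, neg_div]
          rw [this]; exact neg_mem hp } with hK
    obtain ⟨g, hg⟩ := Int.subgroup_cyclic K
    have hmemK : ∀ n : ℤ, n ∈ K ↔ ∃ k : ℤ, k * g = n := by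
      intro n
      rw [hg, AddSubgroup.mem_closure_singleton]
      simp [zsmul_eq_mul]
    have hgK : g ∈ K := by rw [hg]; exact AddSubgroup.subset_closure rfl
    have hgL : axisv i ((g : ℝ) / r) ∈ L := hgK
    set ai := (g : ℝ) / r with hai
    have hrep : ∀ t, axisv i t ∈ L → ∃ n : ℤ, t = n * ai := by
      intro t ht
      obtain ⟨m, hm⟩ := hint t ht
      have htm : t = (m : ℝ) / r := by field_simp; linarith [hm]
      have hmK : m ∈ K := by
        show axisv i ((m : ℝ) / r) ∈ L
        rw [← htm]; exact ht
      obtain ⟨k, hk⟩ := (hmemK m).mp hmK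
      refine ⟨k, ?_⟩
      rw [htm, ← hk, hai]
      push_cast
      ring
    refine ⟨ai, ?_, hgL, hrep⟩
    obtain ⟨v, hv, hvi⟩ := hnz i
    have ht0 : axisv i (2 * v i) ∈ L := hax v hv i
    have ht0n : (2 : ℝ) * v i ≠ 0 := mul_ne_zero two_ne_zero hvi
    intro h0
    obtain ⟨n, hn⟩ := hrep _ ht0
    rw [h0, mul_zero] at hn
    exact ht0n hn
  choose a hane haL harep using key
  exact ⟨a, hane, haL, harep, hax⟩

section Cases
variable {L : AddSubgroup V3} {a : Fin 3 → ℝ}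

lemma case_bcc (S : Setup L a)
    (w : V3) (hw : w ∈ L) (cw : Fin 3 → ℤ) (hcw : ∀ j, 2 * w j = (cw j : ℝ) * a j)
    (p0 : cw 0 % 2 = 1) (p1 : cw 1 % 2 = 1) (p2 : cw 2 % 2 = 1) :
    (fun x : V3 => fun i => a i / 2 * x i) ⁻¹' (L : Set V3) = bccLattice := by
  rw [← bcc_eq']
  refine master (fun i => a i / 2) (fun c => ∀ i j, c i % 2 = c j % 2) ?_ ?_
  · intro x hmem
    obtain ⟨c, hc⟩ := S.hco _ hmem
    have e1 : ¬(c 0 % 2 + c 1 % 2 + c 2 % 2 = 1) := fun h => S.excl3 _ hmem c hc h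
    have e2 : ¬((c 0 - cw 0) % 2 + (c 1 - cw 1) % 2 + (c 2 - cw 2) % 2 = 1) := fun h =>
      S.excl3 _ (sub_mem hmem hw) (fun j => c j - cw j) (coords_sub hc hcw) h
    have q01 : c 0 % 2 = c 1 % 2 := by omega
    have q02 : c 0 % 2 = c 2 % 2 := by omega
    have q12 : c 1 % 2 = c 2 % 2 := by omega
    refine ⟨c, coords_eq S.ha hc, ?_⟩
    intro i j
    fin_cases i <;> fin_cases j <;>
      first | rfl | exact q01 | exact q02 | exact q12
            | exact q01.symm | exact q02.symm | exact q12.symm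
  · intro c hP
    have h01 := hP 0 1
    have h02 := hP 0 2
    have key : (fun i : Fin 3 => a i / 2 * (c i : ℝ)) = fun j => (c j : ℝ) * (a j / 2) := by
      funext j; ring
    rw [key]
    rcases Int.emod_two_eq (c 0) with h0 | h0
    · exact mem_half S.hg c 0 0 (zero_mem L) zero_coords (by
        have r0 : c 0 % 2 = (0 : ℤ) % 2 := by omega
        have r1 : c 1 % 2 = (0 : ℤ) % 2 := by omega
        have r2 : c 2 % 2 = (0 : ℤ) % 2 := by omega
        intro j; fin_cases j <;> assumption)
    · exact mem_half S.hg c cw w hw hcw (by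
        have r0 : c 0 % 2 = cw 0 % 2 := by omega
        have r1 : c 1 % 2 = cw 1 % 2 := by omega
        have r2 : c 2 % 2 = cw 2 % 2 := by omega
        intro j; fin_cases j <;> assumption)

lemma case_fcc (S : Setup L a)
    (w1 w2 : V3) (hw1 : w1 ∈ L) (hw2 : w2 ∈ L) (c1 c2 : Fin 3 → ℤ)
    (hc1 : ∀ j, 2 * w1 j = (c1 j : ℝ) * a j) (hc2 : ∀ j, 2 * w2 j = (c2 j : ℝ) * a j)
    (p10 : c1 0 % 2 = 1) (p11 : c1 1 % 2 = 1) (p12 : c1 2 % 2 = 0)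
    (p20 : c2 0 % 2 = 1) (p21 : c2 1 % 2 = 0) (p22 : c2 2 % 2 = 1) :
    (fun x : V3 => fun i => a i / 2 * x i) ⁻¹' (L : Set V3) = fccLattice := by
  rw [← fcc_eq']
  refine master (fun i => a i / 2) (fun c => 2 ∣ (c 0 + c 1 + c 2)) ?_ ?_
  · intro x hmem
    obtain ⟨c, hc⟩ := S.hco _ hmem
    have e1 : ¬(c 0 % 2 + c 1 % 2 + c 2 % 2 = 1) := fun h => S.excl3 _ hmem c hc h
    have e2 : ¬((c 0 - c1 0) % 2 + (c 1 - c1 1) % 2 + (c 2 - c1 2) % 2 = 1) := fun h =>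
      S.excl3 _ (sub_mem hmem hw1) (fun j => c j - c1 j) (coords_sub hc hc1) h
    exact ⟨c, coords_eq S.ha hc, by omega⟩
  · intro c hP
    have key : (fun i : Fin 3 => a i / 2 * (c i : ℝ)) = fun j => (c j : ℝ) * (a j / 2) := by
      funext j; ring
    rw [key]
    have hc3 := coords_sub hc1 hc2
    rcases Int.emod_two_eq (c 0) with h0 | h0 <;> rcases Int.emod_two_eq (c 1) with h1 | h1 <;>
      rcases Int.emod_two_eq (c 2) with h2 | h2
    · exact mem_half S.hg c 0 0 (zero_mem L) zero_coords (by
        have r0 : c 0 % 2 = (0 : ℤ) % 2 := by omega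
        have r1 : c 1 % 2 = (0 : ℤ) % 2 := by omega
        have r2 : c 2 % 2 = (0 : ℤ) % 2 := by omega
        intro j; fin_cases j <;> assumption)
    · exfalso; omega
    · exfalso; omega
    · exact mem_half S.hg c (fun j => c1 j - c2 j) (w1 - w2) (sub_mem hw1 hw2) hc3 (by
        have r0 : c 0 % 2 = (c1 0 - c2 0) % 2 := by omega
        have r1 : c 1 % 2 = (c1 1 - c2 1) % 2 := by omega
        have r2 : c 2 % 2 = (c1 2 - c2 2) % 2 := by omega
        intro j; fin_cases j <;> assumption)
    · exfalso; omega
    · exact mem_half S.hg c c2 w2 hw2 hc2 (by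
        have r0 : c 0 % 2 = c2 0 % 2 := by omega
        have r1 : c 1 % 2 = c2 1 % 2 := by omega
        have r2 : c 2 % 2 = c2 2 % 2 := by omega
        intro j; fin_cases j <;> assumption)
    · exact mem_half S.hg c c1 w1 hw1 hc1 (by
        have r0 : c 0 % 2 = c1 0 % 2 := by omega
        have r1 : c 1 % 2 = c1 1 % 2 := by omega
        have r2 : c 2 % 2 = c1 2 % 2 := by omega
        intro j; fin_cases j <;> assumption)
    · exfalso; omega

lemma case_cubic (S : Setup L a)
    (hcl : ∀ v ∈ L, ∀ c : Fin 3 → ℤ, (∀ j, 2 * v j = (c j : ℝ) * a j) → ∀ j, c j % 2 = 0) :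
    (fun x : V3 => fun i => a i * x i) ⁻¹' (L : Set V3) = cubicLattice := by
  rw [← cubic_eq']
  refine master a (fun _ => True) ?_ ?_
  · intro x hmem
    obtain ⟨c, hc⟩ := S.hco _ hmem
    have he := hcl _ hmem c hc
    exact ⟨fun i => c i / 2, fun i => one_cancel (S.ha i) (hc i) (he i), trivial⟩
  · intro c _
    have key : (fun i : Fin 3 => a i * (c i : ℝ)) = fun j => (c j : ℝ) * a j := by
      funext j; ring
    rw [key]; exact S.hg c

lemma case4 (S : Setup L a)
    (w1 : V3) (hw1 : w1 ∈ L) (c1 : Fin 3 → ℤ) (hc1 : ∀ j, 2 * w1 j = (c1 j : ℝ) * a j)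
    (p10 : c1 0 % 2 = 1) (p11 : c1 1 % 2 = 1) (p12 : c1 2 % 2 = 0)
    (hcl : ∀ v ∈ L, ∀ c : Fin 3 → ℤ, (∀ j, 2 * v j = (c j : ℝ) * a j) →
      (c 0 % 2 = c 1 % 2 ∧ c 2 % 2 = 0)) :
    (fun x : V3 => fun i => (![a 0 / 2, a 1 / 2, a 2] : V3) i * x i) ⁻¹' (L : Set V3)
      = latticeOf ![1, 1, 0] ![1, -1, 0] ![0, 0, 1] := by
  rw [← lat4_eq]
  refine master ![a 0 / 2, a 1 / 2, a 2] (fun c => c 0 % 2 = c 1 % 2) ?_ ?_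
  · intro x hmem
    obtain ⟨c, hc⟩ := S.hco _ hmem
    obtain ⟨hp, he⟩ := hcl _ hmem c hc
    have h0 : x 0 = (c 0 : ℝ) := half_cancel (S.ha 0) (by have := hc 0; simpa using this)
    have h1 : x 1 = (c 1 : ℝ) := half_cancel (S.ha 1) (by have := hc 1; simpa using this)
    have h2 : x 2 = ((c 2 / 2 : ℤ) : ℝ) := one_cancel (S.ha 2)
      (by have := hc 2; simpa using this) he
    refine ⟨![c 0, c 1, c 2 / 2], ?_, by simpa using hp⟩
    intro i; fin_cases i
    · simpa using h0
    · simpa using h1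
    · simpa using h2
  · intro c' hP
    have key : (fun i : Fin 3 => (![a 0 / 2, a 1 / 2, a 2] : V3) i * (c' i : ℝ))
        = fun j => ((![c' 0, c' 1, 2 * c' 2] : Fin 3 → ℤ) j : ℝ) * (a j / 2) := by
      funext j; fin_cases j <;> simp <;> push_cast <;> ring
    rw [key]
    rcases Int.emod_two_eq (c' 0) with h0 | h0
    · refine mem_half S.hg _ 0 0 (zero_mem L) zero_coords ?_
      have r0 : c' 0 % 2 = (0 : ℤ) % 2 := by omega
      have r1 : c' 1 % 2 = (0 : ℤ) % 2 := by omega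
      have r2 : (2 * c' 2) % 2 = (0 : ℤ) % 2 := by omega
      intro j; fin_cases j <;> assumption
    · refine mem_half S.hg _ c1 w1 hw1 hc1 ?_
      have r0 : c' 0 % 2 = c1 0 % 2 := by omega
      have r1 : c' 1 % 2 = c1 1 % 2 := by omega
      have r2 : (2 * c' 2) % 2 = c1 2 % 2 := by omega
      intro j; fin_cases j <;> assumption

lemma case5 (S : Setup L a)
    (w2 : V3) (hw2 : w2 ∈ L) (c2 : Fin 3 → ℤ) (hc2 : ∀ j, 2 * w2 j = (c2 j : ℝ) * a j)
    (p20 : c2 0 % 2 = 1) (p21 : c2 1 % 2 = 0) (p22 : c2 2 % 2 = 1)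
    (hcl : ∀ v ∈ L, ∀ c : Fin 3 → ℤ, (∀ j, 2 * v j = (c j : ℝ) * a j) →
      (c 1 % 2 = 0 ∧ c 0 % 2 = c 2 % 2)) :
    (fun x : V3 => fun i => a i / 2 * x i) ⁻¹' (L : Set V3)
      = latticeOf ![2, 0, 0] ![0, 2, 0] ![1, 0, 1] := by
  rw [← lat5_eq]
  refine master (fun i => a i / 2) (fun c => c 1 % 2 = 0 ∧ c 0 % 2 = c 2 % 2) ?_ ?_
  · intro x hmem
    obtain ⟨c, hc⟩ := S.hco _ hmem
    exact ⟨c, coords_eq S.ha hc, hcl _ hmem c hc⟩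
  · intro c hP
    obtain ⟨hP1, hP2⟩ := hP
    have key : (fun i : Fin 3 => a i / 2 * (c i : ℝ)) = fun j => (c j : ℝ) * (a j / 2) := by
      funext j; ring
    rw [key]
    rcases Int.emod_two_eq (c 0) with h0 | h0
    · exact mem_half S.hg c 0 0 (zero_mem L) zero_coords (by
        have r0 : c 0 % 2 = (0 : ℤ) % 2 := by omega
        have r1 : c 1 % 2 = (0 : ℤ) % 2 := by omega
        have r2 : c 2 % 2 = (0 : ℤ) % 2 := by omega
        intro j; fin_cases j <;> assumption)
    · exact mem_half S.hg c c2 w2 hw2 hc2 (by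
        have r0 : c 0 % 2 = c2 0 % 2 := by omega
        have r1 : c 1 % 2 = c2 1 % 2 := by omega
        have r2 : c 2 % 2 = c2 2 % 2 := by omega
        intro j; fin_cases j <;> assumption)

lemma case6 (S : Setup L a)
    (w3 : V3) (hw3 : w3 ∈ L) (c3 : Fin 3 → ℤ) (hc3 : ∀ j, 2 * w3 j = (c3 j : ℝ) * a j)
    (p30 : c3 0 % 2 = 0) (p31 : c3 1 % 2 = 1) (p32 : c3 2 % 2 = 1)
    (hcl : ∀ v ∈ L, ∀ c : Fin 3 → ℤ, (∀ j, 2 * v j = (c j : ℝ) * a j) →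
      (c 0 % 2 = 0 ∧ c 1 % 2 = c 2 % 2)) :
    (fun x : V3 => fun i => a i / 2 * x i) ⁻¹' (L : Set V3)
      = latticeOf ![2, 0, 0] ![0, 2, 0] ![0, 1, 1] := by
  rw [← lat6_eq]
  refine master (fun i => a i / 2) (fun c => c 0 % 2 = 0 ∧ c 1 % 2 = c 2 % 2) ?_ ?_
  · intro x hmem
    obtain ⟨c, hc⟩ := S.hco _ hmem
    exact ⟨c, coords_eq S.ha hc, hcl _ hmem c hc⟩
  · intro c hP
    obtain ⟨hP1, hP2⟩ := hP
    have key : (fun i : Fin 3 => a i / 2 * (c i : ℝ)) = fun j => (c j : ℝ) * (a j / 2) := by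
      funext j; ring
    rw [key]
    rcases Int.emod_two_eq (c 1) with h1 | h1
    · exact mem_half S.hg c 0 0 (zero_mem L) zero_coords (by
        have r0 : c 0 % 2 = (0 : ℤ) % 2 := by omega
        have r1 : c 1 % 2 = (0 : ℤ) % 2 := by omega
        have r2 : c 2 % 2 = (0 : ℤ) % 2 := by omega
        intro j; fin_cases j <;> assumption)
    · exact mem_half S.hg c c3 w3 hw3 hc3 (by
        have r0 : c 0 % 2 = c3 0 % 2 := by omega
        have r1 : c 1 % 2 = c3 1 % 2 := by omega
        have r2 : c 2 % 2 = c3 2 % 2 := by omega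
        intro j; fin_cases j <;> assumption)

end Cases


/-- A full-rank lattice in `ℝ³` preserved by the reflections in the planes
`x = 0` and `y = 0` (the group `D̃₂`) is the image under some invertible diagonal linear map
of one of six explicit lattices. -/
theorem statement10 (L : AddSubgroup V3) (hL : IsFullLattice L)
    (hx : (fun x : V3 => ![-(x 0), x 1, x 2]) '' (L : Set V3) = (L : Set V3))
    (hy : (fun x : V3 => ![x 0, -(x 1), x 2]) '' (L : Set V3) = (L : Set V3)) :
    ∃ d : Fin 3 → ℝ, (∀ i, d i ≠ 0) ∧
      ((fun x : V3 => fun i => d i * x i) ⁻¹' (L : Set V3)) ∈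
        ({cubicLattice, bccLattice, fccLattice,
          latticeOf ![1, 1, 0] ![1, -1, 0] ![0, 0, 1],
          latticeOf ![2, 0, 0] ![0, 2, 0] ![1, 0, 1],
          latticeOf ![2, 0, 0] ![0, 2, 0] ![0, 1, 1]} : Set (Set V3)) := by
  obtain ⟨a, hane, haL, harep, hax⟩ := exists_gen L hL hx hy
  have haxmul : ∀ (i : Fin 3) (n : ℤ), axisv i ((n : ℝ) * a i) ∈ L := by
    intro i n
    have key : axisv i ((n : ℝ) * a i) = n • axisv i (a i) := by
      funext j; by_cases hj : j = i <;> simp [axisv, hj]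
    rw [key]; exact zsmul_mem (haL i) n
  have hg : ∀ m : Fin 3 → ℤ, (fun j => (m j : ℝ) * a j) ∈ L := by
    intro m
    have key : (fun j => (m j : ℝ) * a j) =
        axisv 0 ((m 0 : ℝ) * a 0) + axisv 1 ((m 1 : ℝ) * a 1) + axisv 2 ((m 2 : ℝ) * a 2) := by
      funext j; fin_cases j <;> simp [axisv]
    rw [key]
    exact add_mem (add_mem (haxmul 0 (m 0)) (haxmul 1 (m 1))) (haxmul 2 (m 2))
  have hco : ∀ v ∈ L, ∃ c : Fin 3 → ℤ, ∀ j, 2 * v j = (c j : ℝ) * a j := by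
    intro v hv
    have h := fun j => harep j _ (hax v hv j)
    choose c hc using h
    exact ⟨c, hc⟩
  have hmin : ∀ (i : Fin 3) (n : ℤ), n % 2 = 1 → axisv i ((n : ℝ) * (a i / 2)) ∉ L := by
    intro i n hn hmem
    obtain ⟨m, hm⟩ := harep i _ hmem
    have h2 : (n : ℝ) * a i = ((2 * m : ℤ) : ℝ) * a i := by push_cast; linear_combination 2 * hm
    have h3 : (n : ℝ) = ((2 * m : ℤ) : ℝ) := mul_right_cancel₀ (hane i) h2
    have h4 : n = 2 * m := by exact_mod_cast h3
    omega
  have S : Setup L a := ⟨hane, hg, hco, hmin⟩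
  by_cases h111 : ∃ v, v ∈ L ∧ ∃ c : Fin 3 → ℤ,
      (∀ j, 2 * v j = (c j : ℝ) * a j) ∧ (c 0 % 2 = 1 ∧ c 1 % 2 = 1 ∧ c 2 % 2 = 1)
  · -- body-centred cubic
    obtain ⟨w, hw, cw, hcw, p0, p1, p2⟩ := h111
    refine ⟨fun i => a i / 2, fun i => div_ne_zero (hane i) two_ne_zero, ?_⟩
    show (fun x : V3 => fun i => a i / 2 * x i) ⁻¹' (L : Set V3) ∈ _
    rw [case_bcc S w hw cw hcw p0 p1 p2]
    simp only [Set.mem_insert_iff, Set.mem_singleton_iff]; tauto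
  by_cases h110 : ∃ v, v ∈ L ∧ ∃ c : Fin 3 → ℤ,
      (∀ j, 2 * v j = (c j : ℝ) * a j) ∧ (c 0 % 2 = 1 ∧ c 1 % 2 = 1 ∧ c 2 % 2 = 0)
  · obtain ⟨w1, hw1, c1, hc1, p10, p11, p12⟩ := h110
    by_cases hro : (∃ v, v ∈ L ∧ ∃ c : Fin 3 → ℤ,
        (∀ j, 2 * v j = (c j : ℝ) * a j) ∧ (c 0 % 2 = 1 ∧ c 1 % 2 = 0 ∧ c 2 % 2 = 1)) ∨
        (∃ v, v ∈ L ∧ ∃ c : Fin 3 → ℤ,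
        (∀ j, 2 * v j = (c j : ℝ) * a j) ∧ (c 0 % 2 = 0 ∧ c 1 % 2 = 1 ∧ c 2 % 2 = 1))
    · -- face-centred cubic
      refine ⟨fun i => a i / 2, fun i => div_ne_zero (hane i) two_ne_zero, ?_⟩
      show (fun x : V3 => fun i => a i / 2 * x i) ⁻¹' (L : Set V3) ∈ _
      rcases hro with h101 | h011
      · obtain ⟨w2, hw2, c2, hc2, p20, p21, p22⟩ := h101
        rw [case_fcc S w1 w2 hw1 hw2 c1 c2 hc1 hc2 p10 p11 p12 p20 p21 p22]
        simp only [Set.mem_insert_iff, Set.mem_singleton_iff]; tauto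
      · obtain ⟨w3, hw3, c3, hc3, p30, p31, p32⟩ := h011
        rw [case_fcc S w1 (w1 - w3) hw1 (sub_mem hw1 hw3) c1 (fun j => c1 j - c3 j) hc1
          (coords_sub hc1 hc3) p10 p11 p12
          (by show (c1 0 - c3 0) % 2 = 1; omega)
          (by show (c1 1 - c3 1) % 2 = 0; omega)
          (by show (c1 2 - c3 2) % 2 = 1; omega)]
        simp only [Set.mem_insert_iff, Set.mem_singleton_iff]; tauto
    · -- lattice 4
      have hn101 := fun h => hro (Or.inl h)
      have hn011 := fun h => hro (Or.inr h)
      have hcl : ∀ v ∈ L, ∀ c : Fin 3 → ℤ, (∀ j, 2 * v j = (c j : ℝ) * a j) →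
          (c 0 % 2 = c 1 % 2 ∧ c 2 % 2 = 0) := by
        intro v hv c hc
        have e1 : ¬(c 0 % 2 + c 1 % 2 + c 2 % 2 = 1) := fun h => S.excl3 _ hv c hc h
        have e2 : ¬(c 0 % 2 = 1 ∧ c 1 % 2 = 1 ∧ c 2 % 2 = 1) := fun h => h111 ⟨v, hv, c, hc, h⟩
        have e4 : ¬(c 0 % 2 = 1 ∧ c 1 % 2 = 0 ∧ c 2 % 2 = 1) := fun h =>
          hn101 ⟨v, hv, c, hc, h⟩
        have e5 : ¬(c 0 % 2 = 0 ∧ c 1 % 2 = 1 ∧ c 2 % 2 = 1) := fun h =>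
          hn011 ⟨v, hv, c, hc, h⟩
        omega
      refine ⟨![a 0 / 2, a 1 / 2, a 2], ?_, ?_⟩
      · intro i; fin_cases i
        · exact div_ne_zero (hane 0) two_ne_zero
        · exact div_ne_zero (hane 1) two_ne_zero
        · exact hane 2
      show (fun x : V3 => fun i => (![a 0 / 2, a 1 / 2, a 2] : V3) i * x i) ⁻¹' (L : Set V3) ∈ _
      rw [case4 S w1 hw1 c1 hc1 p10 p11 p12 hcl]
      simp only [Set.mem_insert_iff, Set.mem_singleton_iff]; tauto
  by_cases h101 : ∃ v, v ∈ L ∧ ∃ c : Fin 3 → ℤ,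
      (∀ j, 2 * v j = (c j : ℝ) * a j) ∧ (c 0 % 2 = 1 ∧ c 1 % 2 = 0 ∧ c 2 % 2 = 1)
  · -- lattice 5 (011 cannot occur, else 110 occurs)
    obtain ⟨w2, hw2, c2, hc2, p20, p21, p22⟩ := h101
    have hn011 : ¬∃ v, v ∈ L ∧ ∃ c : Fin 3 → ℤ,
        (∀ j, 2 * v j = (c j : ℝ) * a j) ∧ (c 0 % 2 = 0 ∧ c 1 % 2 = 1 ∧ c 2 % 2 = 1) := by
      rintro ⟨w3, hw3, c3, hc3, p30, p31, p32⟩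
      exact h110 ⟨w2 - w3, sub_mem hw2 hw3, fun j => c2 j - c3 j, coords_sub hc2 hc3,
        (by show (c2 0 - c3 0) % 2 = 1; omega),
        (by show (c2 1 - c3 1) % 2 = 1; omega),
        (by show (c2 2 - c3 2) % 2 = 0; omega)⟩
    have hcl : ∀ v ∈ L, ∀ c : Fin 3 → ℤ, (∀ j, 2 * v j = (c j : ℝ) * a j) →
        (c 1 % 2 = 0 ∧ c 0 % 2 = c 2 % 2) := by
      intro v hv c hc
      have e1 : ¬(c 0 % 2 + c 1 % 2 + c 2 % 2 = 1) := fun h => S.excl3 _ hv c hc h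
      have e2 : ¬(c 0 % 2 = 1 ∧ c 1 % 2 = 1 ∧ c 2 % 2 = 1) := fun h => h111 ⟨v, hv, c, hc, h⟩
      have e3 : ¬(c 0 % 2 = 1 ∧ c 1 % 2 = 1 ∧ c 2 % 2 = 0) := fun h => h110 ⟨v, hv, c, hc, h⟩
      have e5 : ¬(c 0 % 2 = 0 ∧ c 1 % 2 = 1 ∧ c 2 % 2 = 1) := fun h => hn011 ⟨v, hv, c, hc, h⟩
      omega
    refine ⟨fun i => a i / 2, fun i => div_ne_zero (hane i) two_ne_zero, ?_⟩
    show (fun x : V3 => fun i => a i / 2 * x i) ⁻¹' (L : Set V3) ∈ _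
    rw [case5 S w2 hw2 c2 hc2 p20 p21 p22 hcl]
    simp only [Set.mem_insert_iff, Set.mem_singleton_iff]; tauto
  by_cases h011 : ∃ v, v ∈ L ∧ ∃ c : Fin 3 → ℤ,
      (∀ j, 2 * v j = (c j : ℝ) * a j) ∧ (c 0 % 2 = 0 ∧ c 1 % 2 = 1 ∧ c 2 % 2 = 1)
  · -- lattice 6
    obtain ⟨w3, hw3, c3, hc3, p30, p31, p32⟩ := h011
    have hcl : ∀ v ∈ L, ∀ c : Fin 3 → ℤ, (∀ j, 2 * v j = (c j : ℝ) * a j) →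
        (c 0 % 2 = 0 ∧ c 1 % 2 = c 2 % 2) := by
      intro v hv c hc
      have e1 : ¬(c 0 % 2 + c 1 % 2 + c 2 % 2 = 1) := fun h => S.excl3 _ hv c hc h
      have e2 : ¬(c 0 % 2 = 1 ∧ c 1 % 2 = 1 ∧ c 2 % 2 = 1) := fun h => h111 ⟨v, hv, c, hc, h⟩
      have e3 : ¬(c 0 % 2 = 1 ∧ c 1 % 2 = 1 ∧ c 2 % 2 = 0) := fun h => h110 ⟨v, hv, c, hc, h⟩
      have e4 : ¬(c 0 % 2 = 1 ∧ c 1 % 2 = 0 ∧ c 2 % 2 = 1) := fun h => h101 ⟨v, hv, c, hc, h⟩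
      omega
    refine ⟨fun i => a i / 2, fun i => div_ne_zero (hane i) two_ne_zero, ?_⟩
    show (fun x : V3 => fun i => a i / 2 * x i) ⁻¹' (L : Set V3) ∈ _
    rw [case6 S w3 hw3 c3 hc3 p30 p31 p32 hcl]
    simp only [Set.mem_insert_iff, Set.mem_singleton_iff]; tauto
  · -- cubic
    have hcl : ∀ v ∈ L, ∀ c : Fin 3 → ℤ, (∀ j, 2 * v j = (c j : ℝ) * a j) →
        ∀ j, c j % 2 = 0 := by
      intro v hv c hc
      have e1 : ¬(c 0 % 2 + c 1 % 2 + c 2 % 2 = 1) := fun h => S.excl3 _ hv c hc h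
      have e2 : ¬(c 0 % 2 = 1 ∧ c 1 % 2 = 1 ∧ c 2 % 2 = 1) := fun h => h111 ⟨v, hv, c, hc, h⟩
      have e3 : ¬(c 0 % 2 = 1 ∧ c 1 % 2 = 1 ∧ c 2 % 2 = 0) := fun h => h110 ⟨v, hv, c, hc, h⟩
      have e4 : ¬(c 0 % 2 = 1 ∧ c 1 % 2 = 0 ∧ c 2 % 2 = 1) := fun h => h101 ⟨v, hv, c, hc, h⟩
      have e5 : ¬(c 0 % 2 = 0 ∧ c 1 % 2 = 1 ∧ c 2 % 2 = 1) := fun h => h011 ⟨v, hv, c, hc, h⟩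
      have z0 : c 0 % 2 = 0 := by omega
      have z1 : c 1 % 2 = 0 := by omega
      have z2 : c 2 % 2 = 0 := by omega
      intro j; fin_cases j <;> assumption
    refine ⟨a, hane, ?_⟩
    show (fun x : V3 => fun i => a i * x i) ⁻¹' (L : Set V3) ∈ _
    rw [case_cubic S hcl]
    simp only [Set.mem_insert_iff, Set.mem_singleton_iff]; tauto


end
end

section
/- Let L be a full-rank lattice in ℝ³ that is preserved by the group D̃₄ generated by the reflection in the plane x = 0 and the reflection in the plane x = y. Then there exist positive real numbers a, b such that, for the diagonal linear map D = diag(a, a, b), the lattice D⁻¹(L) is one of: Λ₍₁,₀,₀₎ = ℤ³; Λ₍₁,₁,₁₎ (body-centred cubic); Λ₍₁,₁,₀₎ (face-centred cubic); or the lattice ℤ(1,1,0) + ℤ(1,−1,0) + ℤ(0,0,1). -/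
noncomputable section

/-! ### Auxiliary machinery -/

/-- Triple constructor for `V3`. -/
def vec3 (x y z : ℝ) : V3 := ![x, y, z]

@[simp] lemma vec3_app0 (x y z : ℝ) : vec3 x y z 0 = x := rfl
@[simp] lemma vec3_app1 (x y z : ℝ) : vec3 x y z 1 = y := rfl
@[simp] lemma vec3_app2 (x y z : ℝ) : vec3 x y z 2 = z := rfl

lemma vec3_eta (v : V3) : v = vec3 (v 0) (v 1) (v 2) := by
  funext i; fin_cases i <;> rfl

lemma vec3_add (x y z x' y' z' : ℝ) :
    vec3 x y z + vec3 x' y' z' = vec3 (x+x') (y+y') (z+z') := by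
  funext i; fin_cases i <;> simp [vec3]

lemma vec3_sub (x y z x' y' z' : ℝ) :
    vec3 x y z - vec3 x' y' z' = vec3 (x-x') (y-y') (z-z') := by
  funext i; fin_cases i <;> simp [vec3]

lemma vec3_zsmul (n : ℤ) (x y z : ℝ) : n • vec3 x y z = vec3 (n*x) (n*y) (n*z) := by
  funext i; fin_cases i <;> simp [vec3]

lemma vec3_eqc {x y z x' y' z' : ℝ} (h1 : x = x') (h2 : y = y') (h3 : z = z') :
    vec3 x y z = vec3 x' y' z' := by rw [h1, h2, h3]

/-- Points of a full lattice in a bounded region form a finite set. -/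
lemma lat_finite (L : AddSubgroup V3) (hL : IsFullLattice L) (R : ℝ) :
    {v : V3 | v ∈ L ∧ ∀ i, |v i| ≤ R}.Finite := by
  obtain ⟨b, hb⟩ := hL
  have hcont : ∀ i : Fin 3, ∃ C : ℝ, 0 ≤ C ∧ ∀ v : V3, |b.repr v i| ≤ C * ‖v‖ := by
    intro i
    set g : V3 →L[ℝ] ℝ := LinearMap.toContinuousLinearMap
      ((Finsupp.lapply i : (Fin 3 →₀ ℝ) →ₗ[ℝ] ℝ).comp (b.repr : V3 →ₗ[ℝ] (Fin 3 →₀ ℝ)))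
    refine ⟨‖g‖, norm_nonneg _, fun v => ?_⟩
    have := g.le_opNorm v
    simpa [g, Real.norm_eq_abs] using this
  choose C hC0 hC using hcont
  set D : ℝ := (C 0 + C 1 + C 2) * (|R| + 1)
  set T : Set (Fin 3 → ℤ) := Set.pi Set.univ (fun _ => Set.Icc (-⌈D⌉) ⌈D⌉)
  have hT : T.Finite := Set.Finite.pi (fun _ => Set.finite_Icc _ _)
  refine Set.Finite.subset (hT.image (fun c => ∑ i, (c i : ℝ) • b i)) ?_
  rintro v ⟨hv, hvR⟩
  obtain ⟨c, hc⟩ := (hb v).1 hv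
  refine ⟨c, ?_, hc.symm⟩
  have hrepr : ∀ i, (b.repr v) i = (c i : ℝ) := by
    intro i
    rw [hc]
    rw [b.repr_sum_self]
  have hnv : ‖v‖ ≤ |R| + 1 := by
    apply pi_norm_le_iff_of_nonneg (by positivity) |>.2
    intro i
    rw [Real.norm_eq_abs]
    calc |v i| ≤ R := hvR i
      _ ≤ |R| + 1 := by cases abs_cases R <;> linarith
  intro i _
  have h1 : |(c i : ℝ)| ≤ D := by
    rw [← hrepr i]
    calc |(b.repr v) i| ≤ C i * ‖v‖ := hC i v
      _ ≤ D := by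
          have h2 : C i ≤ C 0 + C 1 + C 2 := by
            fin_cases i <;> simp <;> nlinarith [hC0 0, hC0 1, hC0 2]
          have := hC0 i
          have hn : (0:ℝ) ≤ ‖v‖ := norm_nonneg _
          calc C i * ‖v‖ ≤ C i * (|R|+1) := by nlinarith
            _ ≤ D := by simp only [D]; nlinarith
  have : |c i| ≤ ⌈D⌉ := by
    have h3 : ((|c i| : ℤ) : ℝ) ≤ ((⌈D⌉ : ℤ) : ℝ) := by
      push_cast
      calc (|(c i : ℝ)|) ≤ D := h1
        _ ≤ ⌈D⌉ := Int.le_ceil D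
    exact_mod_cast h3
  simp only [Set.mem_Icc]
  constructor <;> [linarith [neg_abs_le (c i)]; linarith [le_abs_self (c i)]]

lemma int_sq_cases (m n : ℤ) (h : m^2 + n^2 = 1) :
    (m = 1 ∧ n = 0) ∨ (m = -1 ∧ n = 0) ∨ (m = 0 ∧ n = 1) ∨ (m = 0 ∧ n = -1) := by
  have hb1 : -1 ≤ m ∧ m ≤ 1 := by
    constructor <;> nlinarith [sq_nonneg n, sq_nonneg (m-1), sq_nonneg (m+1)]
  have hb2 : -1 ≤ n ∧ n ≤ 1 := by
    constructor <;> nlinarith [sq_nonneg m, sq_nonneg (n-1), sq_nonneg (n+1)]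
  obtain ⟨c1, c2⟩ := hb1
  obtain ⟨c3, c4⟩ := hb2
  interval_cases m <;> interval_cases n <;> revert h <;> norm_num

/-- Classification of rank-≤2 lattices in the plane invariant under the dihedral
group of the square. -/
lemma plane_classify (P : ℝ → ℝ → Prop)
    (hsub : ∀ x y x' y', P x y → P x' y' → P (x - x') (y - y'))
    (hsmul : ∀ (n : ℤ) x y, P x y → P (n*x) (n*y))
    (hnegx : ∀ x y, P x y → P (-x) y)
    (hswap : ∀ x y, P x y → P y x)
    (hmin : ∃ p q, P p q ∧ ¬(p = 0 ∧ q = 0) ∧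
      ∀ x y, P x y → ¬(x = 0 ∧ y = 0) → p^2+q^2 ≤ x^2+y^2) :
    (∃ a : ℝ, 0 < a ∧ ∀ x y, P x y ↔ ∃ m n : ℤ, x = a*m ∧ y = a*n) ∨
    (∃ a : ℝ, 0 < a ∧ ∀ x y, P x y ↔ ∃ m n : ℤ, x = a*m ∧ y = a*n ∧ 2 ∣ (m+n)) := by
  have hrot : ∀ x y, P x y → P (-y) x := fun x y h => hnegx _ _ (hswap _ _ h)
  have hadd : ∀ x y x' y', P x y → P x' y' → P (x + x') (y + y') := by
    intro x y x' y' h h'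
    have h0 : P 0 0 := by have := hsub _ _ _ _ h h; simpa using this
    have hneg : P (-x') (-y') := by have := hsub _ _ _ _ h0 h'; simpa using this
    have := hsub _ _ _ _ h hneg
    simpa using this
  -- decomposition claim
  have key : ∀ p q : ℝ, P p q → ¬(p = 0 ∧ q = 0) →
      (∀ x y, P x y → ¬(x = 0 ∧ y = 0) → p^2+q^2 ≤ x^2+y^2) →
      ∀ x y, P x y → ∃ m n : ℤ, x = m*p - n*q ∧ y = m*q + n*p := by
    intro p q hu hu0 hm x y hxy
    have hs : 0 < p^2 + q^2 := by
      rcases not_and_or.1 hu0 with h|h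
      · have : 0 < p^2 := by positivity
        nlinarith [sq_nonneg q]
      · have : 0 < q^2 := by positivity
        nlinarith [sq_nonneg p]
    set α : ℝ := (x*p + y*q)/(p^2+q^2) with hα
    set β : ℝ := (y*p - x*q)/(p^2+q^2) with hβ
    have hx' : x = α*p - β*q := by
      rw [hα, hβ]; field_simp; ring
    have hy' : y = α*q + β*p := by
      rw [hα, hβ]; field_simp; ring
    set m : ℤ := round α
    set n : ℤ := round β
    have hr : P (x - ((m:ℝ)*p - (n:ℝ)*q)) (y - ((m:ℝ)*q + (n:ℝ)*p)) := by
      have h1 : P ((m:ℝ)*p) ((m:ℝ)*q) := hsmul m _ _ hu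
      have h2 : P ((n:ℝ)*(-q)) ((n:ℝ)*p) := hsmul n _ _ (hrot _ _ hu)
      have h3 := hsub _ _ _ _ (hsub _ _ _ _ hxy h1) h2
      have e1 : x - (m:ℝ)*p - (n:ℝ)*(-q) = x - ((m:ℝ)*p - (n:ℝ)*q) := by ring
      have e2 : y - (m:ℝ)*q - (n:ℝ)*p = y - ((m:ℝ)*q + (n:ℝ)*p) := by ring
      rwa [e1, e2] at h3
    by_cases hr0 : (x - ((m:ℝ)*p - (n:ℝ)*q)) = 0 ∧ (y - ((m:ℝ)*q + (n:ℝ)*p)) = 0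
    · exact ⟨m, n, by linarith [hr0.1], by linarith [hr0.2]⟩
    · exfalso
      have hle := hm _ _ hr hr0
      have e1 : x - ((m:ℝ)*p - (n:ℝ)*q) = (α - m)*p - (β - n)*q := by
        rw [hx']; ring
      have e2 : y - ((m:ℝ)*q + (n:ℝ)*p) = (α - m)*q + (β - n)*p := by
        rw [hy']; ring
      have hαm : |α - (m:ℝ)| ≤ 1/2 := abs_sub_round α
      have hβn : |β - (n:ℝ)| ≤ 1/2 := abs_sub_round β
      have b1 : (α - m)^2 ≤ 1/4 := by
        rcases abs_le.1 hαm with ⟨l, r⟩; nlinarith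
      have b2 : (β - n)^2 ≤ 1/4 := by
        rcases abs_le.1 hβn with ⟨l, r⟩; nlinarith
      rw [e1, e2] at hle
      nlinarith [hle, hs]
  obtain ⟨p, q, hu, hu0, hm⟩ := hmin
  have hσ : P (-p) q := hnegx _ _ hu
  obtain ⟨m, n, h1, h2⟩ := key p q hu hu0 hm (-p) q hσ
  have hs : 0 < p^2 + q^2 := by
    rcases not_and_or.1 hu0 with h|h
    · have : 0 < p^2 := by positivity
      nlinarith [sq_nonneg q]
    · have : 0 < q^2 := by positivity
      nlinarith [sq_nonneg p]
  have hmn : m^2 + n^2 = 1 := by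
    have hR2 : ((m:ℝ)^2 + (n:ℝ)^2) * (p^2+q^2) = 1 * (p^2+q^2) := by
      linear_combination (p - (m:ℝ)*p + (n:ℝ)*q) * h1 - ((m:ℝ)*q + (n:ℝ)*p + q) * h2
    have hR3 : ((m:ℝ)^2 + (n:ℝ)^2) = 1 := by
      have := mul_right_cancel₀ (ne_of_gt hs) hR2
      exact this
    exact_mod_cast hR3
  -- reduce to two standard positions: (q = 0) or (p = q)
  have hreduce : ∃ p' q', P p' q' ∧ ¬(p' = 0 ∧ q' = 0) ∧
      (∀ x y, P x y → ¬(x = 0 ∧ y = 0) → p'^2+q'^2 ≤ x^2+y^2) ∧ (q' = 0 ∨ p' = q') := by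
    rcases int_sq_cases m n hmn with ⟨hm1, hn1⟩ | ⟨hm1, hn1⟩ | ⟨hm1, hn1⟩ | ⟨hm1, hn1⟩ <;>
      subst hm1 <;> subst hn1 <;> push_cast at h1 h2
    · -- (1,0): p = 0, rotate to (-q, 0)
      have hp : p = 0 := by linarith
      refine ⟨-q, 0, ?_, ?_, ?_, Or.inl rfl⟩
      · have := hrot _ _ hu
        rwa [hp] at this
      · intro ⟨hq1, _⟩
        exact hu0 ⟨hp, by linarith⟩
      · intro x y hxy hxy0
        have := hm x y hxy hxy0
        nlinarith
    · -- (-1,0): q = 0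
      have hq : q = 0 := by linarith
      exact ⟨p, q, hu, hu0, hm, Or.inl hq⟩
    · -- (0,1): p = q
      have hpq : p = q := by linarith
      exact ⟨p, q, hu, hu0, hm, Or.inr hpq⟩
    · -- (0,-1): q = -p, rotate (p,-p) to (p,p)
      have hq : q = -p := by linarith
      refine ⟨p, p, ?_, ?_, ?_, Or.inr rfl⟩
      · have := hrot _ _ hu
        rwa [hq, neg_neg] at this
      · intro ⟨hp1, _⟩
        exact hu0 ⟨hp1, by rw [hq, hp1, neg_zero]⟩
      · intro x y hxy hxy0
        have := hm x y hxy hxy0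
        have hq2 : q^2 = p^2 := by rw [hq]; ring
        linarith
  clear h1 h2 hmn hs hu hu0 hm hσ m n
  obtain ⟨p, q, hu, hu0, hm, hor⟩ := hreduce
  rcases hor with hq | hpq
  · -- square case : u = (p, 0)
    subst hq
    have hp : p ≠ 0 := fun h => hu0 ⟨h, rfl⟩
    left
    refine ⟨|p|, abs_pos.2 hp, fun x y => ⟨fun hxy => ?_, fun ⟨m, n, hx, hy⟩ => ?_⟩⟩
    · obtain ⟨m, n, hx, hy⟩ := key p 0 hu hu0 hm x y hxy
      rcases abs_cases p with ⟨hap, _⟩ | ⟨hap, _⟩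
      · exact ⟨m, n, by rw [hap]; push_cast; linarith, by rw [hap]; push_cast; linarith⟩
      · exact ⟨-m, -n, by rw [hap]; push_cast; linarith, by rw [hap]; push_cast; linarith⟩
    · have h01 : P 0 p := by
        have := hrot _ _ hu; simpa using this
      rcases abs_cases p with ⟨hap, _⟩ | ⟨hap, _⟩
      · have hA : P ((m:ℝ)*p) ((m:ℝ)*0) := hsmul m _ _ hu
        have hB : P ((n:ℝ)*0) ((n:ℝ)*p) := hsmul n _ _ h01
        have := hadd _ _ _ _ hA hB
        have e1 : (m:ℝ)*p + (n:ℝ)*0 = x := by rw [hx, hap]; ring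
        have e2 : (m:ℝ)*0 + (n:ℝ)*p = y := by rw [hy, hap]; ring
        rwa [e1, e2] at this
      · have hA : P (((-m):ℤ)*p) (((-m):ℤ)*0) := hsmul (-m) _ _ hu
        have hB : P (((-n):ℤ)*0) (((-n):ℤ)*p) := hsmul (-n) _ _ h01
        have := hadd _ _ _ _ hA hB
        have e1 : ((-m:ℤ):ℝ)*p + ((-n:ℤ):ℝ)*0 = x := by rw [hx, hap]; push_cast; ring
        have e2 : ((-m:ℤ):ℝ)*0 + ((-n:ℤ):ℝ)*p = y := by rw [hy, hap]; push_cast; ring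
        rwa [e1, e2] at this
  · -- diamond case : u = (p, p)
    rw [← hpq] at hu hu0 hm
    have hp : p ≠ 0 := by
      intro h; exact hu0 ⟨h, h⟩
    right
    refine ⟨|p|, abs_pos.2 hp, fun x y => ⟨fun hxy => ?_, fun ⟨m, n, hx, hy, hmn2⟩ => ?_⟩⟩
    · obtain ⟨m, n, hx, hy⟩ := key p p hu hu0 hm x y hxy
      rcases abs_cases p with ⟨hap, _⟩ | ⟨hap, _⟩
      · refine ⟨m - n, m + n, by rw [hap]; push_cast; linarith,
          by rw [hap]; push_cast; linarith, ⟨m, by ring⟩⟩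
      · refine ⟨n - m, -(m + n), by rw [hap]; push_cast; linarith,
          by rw [hap]; push_cast; linarith, ⟨-m, by ring⟩⟩
    · obtain ⟨t, ht⟩ := hmn2
      have h01 : P (-p) p := hrot _ _ hu
      rcases abs_cases p with ⟨hap, _⟩ | ⟨hap, _⟩
      · have hA : P ((t:ℝ)*p) ((t:ℝ)*p) := hsmul t _ _ hu
        have hB : P (((t-m):ℤ)*(-p)) (((t-m):ℤ)*p) := hsmul (t-m) _ _ h01
        have := hadd _ _ _ _ hA hB
        have hnr : (n:ℝ) = 2*(t:ℝ) - (m:ℝ) := by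
          have h' : n = 2*t - m := by omega
          rw [h']; push_cast; ring
        have e1 : (t:ℝ)*p + ((t-m:ℤ):ℝ)*(-p) = x := by
          rw [hx, hap]; push_cast; ring
        have e2 : (t:ℝ)*p + ((t-m:ℤ):ℝ)*p = y := by
          rw [hy, hap]; push_cast; rw [hnr]; ring
        rwa [e1, e2] at this
      · have hA : P (((-t):ℤ)*p) (((-t):ℤ)*p) := hsmul (-t) _ _ hu
        have hB : P (((m-t):ℤ)*(-p)) (((m-t):ℤ)*p) := hsmul (m-t) _ _ h01
        have := hadd _ _ _ _ hA hB
        have hnr : (n:ℝ) = 2*(t:ℝ) - (m:ℝ) := by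
          have h' : n = 2*t - m := by omega
          rw [h']; push_cast; ring
        have e1 : ((-t:ℤ):ℝ)*p + ((m-t:ℤ):ℝ)*(-p) = x := by
          rw [hx, hap]; push_cast; ring
        have e2 : ((-t:ℤ):ℝ)*p + ((m-t:ℤ):ℝ)*p = y := by
          rw [hy, hap]; push_cast; rw [hnr]; ring
        rwa [e1, e2] at this

/-- A discrete subgroup of `ℝ` with a minimal positive element is cyclic. -/
lemma line_classify (S : ℝ → Prop)
    (hsub : ∀ x y, S x → S y → S (x - y))
    (hsmul : ∀ (n : ℤ) x, S x → S ((n:ℝ)*x))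
    (hmin : ∃ c, 0 < c ∧ S c ∧ ∀ t, S t → 0 < t → c ≤ t) :
    ∃ c, 0 < c ∧ ∀ t, S t ↔ ∃ k : ℤ, t = c*(k:ℝ) := by
  obtain ⟨c, hc, hSc, hm⟩ := hmin
  refine ⟨c, hc, fun t => ⟨fun hSt => ?_, fun ⟨k, hk⟩ => ?_⟩⟩
  · set k : ℤ := ⌊t/c⌋ with hk
    have h1 : (k:ℝ) ≤ t/c := Int.floor_le _
    have h2 : t/c < k + 1 := Int.lt_floor_add_one _
    have h1' : c*(k:ℝ) ≤ t := by
      have := (le_div_iff₀ hc).1 h1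
      nlinarith
    have h2' : t - c*(k:ℝ) < c := by
      have := (div_lt_iff₀ hc).1 h2
      nlinarith
    have hSr : S (t - c*k) := by
      have := hsub t ((k:ℝ)*c) hSt (hsmul k c hSc)
      rwa [mul_comm] at this
    rcases eq_or_lt_of_le (by linarith : (0:ℝ) ≤ t - c*k) with he | hlt
    · exact ⟨k, by linarith⟩
    · exfalso
      have := hm _ hSr hlt
      linarith
  · rw [hk, mul_comm]
    exact hsmul k c hSc

/-- Membership description of the tetragonal lattice `ℤ(1,1,0)+ℤ(1,-1,0)+ℤ(0,0,1)`. -/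
lemma lat4_mem (u : V3) :
    u ∈ latticeOf ![1,1,0] ![1,-1,0] ![0,0,1] ↔
      ∃ m n k : ℤ, u 0 = m ∧ u 1 = n ∧ u 2 = k ∧ 2 ∣ (m+n) := by
  constructor
  · rintro ⟨α, β, γ, hu⟩
    refine ⟨α+β, α-β, γ, ?_, ?_, ?_, ⟨α, by ring⟩⟩ <;>
      rw [hu] <;> simp [Pi.add_apply, Pi.smul_apply] <;> push_cast <;> ring
  · rintro ⟨m, n, k, h0, h1, h2, ⟨t, ht⟩⟩
    have htr : (m:ℝ) + (n:ℝ) = 2*(t:ℝ) := by exact_mod_cast ht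
    refine ⟨t, m - t, k, ?_⟩
    funext i
    fin_cases i
    · simp [Pi.add_apply]; rw [h0]
    · simp [Pi.add_apply]; rw [h1]; linarith
    · simp [Pi.add_apply]; rw [h2]

/-- A full-rank lattice in `ℝ³` preserved by the group `D̃₄` generated by
the reflections in the planes `x = 0` and `x = y` is the image under a diagonal map
`D = diag(a, a, b)` (with `a, b > 0`) of one of four explicit lattices. -/
theorem statement11 (L : AddSubgroup V3) (hL : IsFullLattice L)
    (hx : (fun x : V3 => ![-(x 0), x 1, x 2]) '' (L : Set V3) = (L : Set V3))
    (hxy : (fun x : V3 => ![x 1, x 0, x 2]) '' (L : Set V3) = (L : Set V3)) :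
    ∃ a b : ℝ, 0 < a ∧ 0 < b ∧
      ((fun x : V3 => ![a * x 0, a * x 1, b * x 2]) ⁻¹' (L : Set V3)) ∈
        ({cubicLattice, bccLattice, fccLattice,
          latticeOf ![1, 1, 0] ![1, -1, 0] ![0, 0, 1]} : Set (Set V3)) := by
  classical
  -- closure of L under the reflections and group operations, in coordinates
  have hnegx : ∀ x y z : ℝ, vec3 x y z ∈ L → vec3 (-x) y z ∈ L := by
    intro x y z h
    have h2 : (fun v : V3 => ![-(v 0), v 1, v 2]) (vec3 x y z)
        ∈ (fun v : V3 => ![-(v 0), v 1, v 2]) '' (L : Set V3) := Set.mem_image_of_mem _ h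
    rw [hx] at h2
    exact h2
  have hswap : ∀ x y z : ℝ, vec3 x y z ∈ L → vec3 y x z ∈ L := by
    intro x y z h
    have h2 : (fun v : V3 => ![v 1, v 0, v 2]) (vec3 x y z)
        ∈ (fun v : V3 => ![v 1, v 0, v 2]) '' (L : Set V3) := Set.mem_image_of_mem _ h
    rw [hxy] at h2
    exact h2
  have hnegy : ∀ x y z : ℝ, vec3 x y z ∈ L → vec3 x (-y) z ∈ L :=
    fun x y z h => hswap _ _ _ (hnegx _ _ _ (hswap _ _ _ h))
  have hsubL : ∀ x y z x' y' z' : ℝ, vec3 x y z ∈ L → vec3 x' y' z' ∈ L →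
      vec3 (x-x') (y-y') (z-z') ∈ L := by
    intro x y z x' y' z' h h'
    have := sub_mem h h'
    rwa [vec3_sub] at this
  have haddL : ∀ x y z x' y' z' : ℝ, vec3 x y z ∈ L → vec3 x' y' z' ∈ L →
      vec3 (x+x') (y+y') (z+z') ∈ L := by
    intro x y z x' y' z' h h'
    have := add_mem h h'
    rwa [vec3_add] at this
  have hsmulL : ∀ (n : ℤ) (x y z : ℝ), vec3 x y z ∈ L → vec3 (n*x) (n*y) (n*z) ∈ L := by
    intro n x y z h
    have := zsmul_mem h n
    rwa [vec3_zsmul] at this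
  -- existence of lattice points with a nonzero given coordinate
  have hex : ∀ j : Fin 3, ∃ v : V3, v ∈ L ∧ v j ≠ 0 := by
    intro j
    obtain ⟨b, hb⟩ := hL
    by_contra hcon
    push_neg at hcon
    have hbij : ∀ i, b i j = 0 := by
      intro i
      apply hcon
      apply (hb (b i)).2
      refine ⟨fun k => if k = i then 1 else 0, ?_⟩
      simp
    have h1 : (Pi.single j (1:ℝ) : V3) = ∑ i, b.repr (Pi.single j 1) i • b i :=
      (b.sum_repr _).symm
    have h2 := congrFun h1 j
    rw [Finset.sum_apply] at h2
    simp only [Pi.smul_apply, smul_eq_mul] at h2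
    simp only [hbij, mul_zero, Finset.sum_const_zero, Pi.single_eq_same] at h2
    exact one_ne_zero h2
  -- doubling map into the z-axis
  have hS2 : ∀ x y z : ℝ, vec3 x y z ∈ L → vec3 0 0 (2*z) ∈ L := by
    intro x y z h
    have h1 := hnegy _ _ _ (hnegx _ _ _ h)
    have h2 := haddL _ _ _ _ _ _ h h1
    rwa [show vec3 (x + -x) (y + -y) (z + z) = vec3 0 0 (2*z) from
      vec3_eqc (by ring) (by ring) (by ring)] at h2
  -- the z-axis subgroup is cyclic
  obtain ⟨v, hv, hv2⟩ := hex 2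
  have hvmem : vec3 (v 0) (v 1) (v 2) ∈ L := by rw [← vec3_eta]; exact hv
  have hS0 : vec3 0 0 (2 * v 2) ∈ L := hS2 _ _ _ hvmem
  have ht0pos : (0:ℝ) < |2 * v 2| := abs_pos.2 (mul_ne_zero two_ne_zero hv2)
  have hSt0 : vec3 0 0 |2 * v 2| ∈ L := by
    rcases abs_cases (2 * v 2) with ⟨h, _⟩ | ⟨h, _⟩
    · rw [h]; exact hS0
    · rw [h]
      have := hsmulL (-1) _ _ _ hS0
      rwa [show vec3 (((-1:ℤ):ℝ)*0) (((-1:ℤ):ℝ)*0) (((-1:ℤ):ℝ)*(2*v 2)) = vec3 0 0 (-(2*v 2))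
        from vec3_eqc (by push_cast; ring) (by push_cast; ring) (by push_cast; ring)] at this
  set t0 : ℝ := |2 * v 2| with ht0def
  have hZfin : {t : ℝ | vec3 0 0 t ∈ L ∧ 0 < t ∧ t ≤ t0}.Finite := by
    apply Set.Finite.subset ((lat_finite L hL t0).image (fun u : V3 => u 2))
    rintro t ⟨hSt, ht1, ht2⟩
    refine ⟨vec3 0 0 t, ⟨hSt, ?_⟩, rfl⟩
    intro i
    fin_cases i
    · simpa using le_of_lt ht0pos
    · simpa using le_of_lt ht0pos
    · simpa [abs_of_pos ht1] using ht2
  obtain ⟨c, hcpos, hciff⟩ := line_classify (fun t => vec3 0 0 t ∈ L)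
    (fun s t hs' ht' => by
      have := hsubL 0 0 s 0 0 t hs' ht'
      rwa [show vec3 ((0:ℝ)-0) ((0:ℝ)-0) (s-t) = vec3 0 0 (s-t) from
        vec3_eqc (by ring) (by ring) rfl] at this)
    (fun n t ht' => by
      have := hsmulL n 0 0 t ht'
      rwa [show vec3 ((n:ℝ)*0) ((n:ℝ)*0) ((n:ℝ)*t) = vec3 0 0 ((n:ℝ)*t) from
        vec3_eqc (by ring) (by ring) rfl] at this)
    (by
      obtain ⟨cm, hcmZ, hcmin⟩ := Set.exists_min_image _ id hZfin ⟨t0, hSt0, ht0pos, le_refl _⟩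
      refine ⟨cm, hcmZ.2.1, hcmZ.1, fun t hSt htpos => ?_⟩
      by_cases hle : t ≤ t0
      · exact hcmin t ⟨hSt, htpos, hle⟩
      · have h1 := hcmin t0 ⟨hSt0, ht0pos, le_refl _⟩
        simp only [id] at h1
        linarith)
  have hzk : ∀ k : ℤ, vec3 0 0 (c*(k:ℝ)) ∈ L := fun k => (hciff _).2 ⟨k, rfl⟩
  have hpl : ∀ (x y z : ℝ) (k : ℤ), z = c*(k:ℝ) → vec3 x y z ∈ L → vec3 x y 0 ∈ L := by
    intro x y z k hzkk h
    have := hsubL x y z 0 0 (c*(k:ℝ)) h (hzk k)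
    rwa [show vec3 (x-0) (y-0) (z - c*(k:ℝ)) = vec3 x y 0 from
      vec3_eqc (by ring) (by ring) (by rw [hzkk]; ring)] at this
  have h2ziff : ∀ x y z : ℝ, vec3 x y z ∈ L → ∃ K : ℤ, 2*z = c*K :=
    fun x y z h => (hciff _).1 (hS2 _ _ _ h)
  -- glue dichotomy
  have hgluecase : (∀ x y z : ℝ, vec3 x y z ∈ L → ∃ k : ℤ, z = c*k) ∨
      (∃ gx gy : ℝ, vec3 gx gy (c/2) ∈ L ∧ ¬ vec3 gx gy 0 ∈ L) := by
    by_cases hglue : ∀ x y z : ℝ, vec3 x y z ∈ L → ∃ k : ℤ, z = c*k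
    · exact Or.inl hglue
    · right
      push_neg at hglue
      obtain ⟨gx, gy, gz, hgmem, hgz⟩ := hglue
      obtain ⟨K, hK⟩ := h2ziff _ _ _ hgmem
      have hKodd : ∃ j : ℤ, K = 2*j+1 := by
        rcases Int.even_or_odd K with ⟨j, hj⟩ | ⟨j, hj⟩
        · exfalso
          apply hgz j
          rw [hj] at hK; push_cast at hK; linarith
        · exact ⟨j, hj⟩
      obtain ⟨j, hj⟩ := hKodd
      have hgc : vec3 gx gy (c/2) ∈ L := by
        have := hsubL gx gy gz 0 0 (c*(j:ℝ)) hgmem (hzk j)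
        rwa [show vec3 (gx-0) (gy-0) (gz - c*(j:ℝ)) = vec3 gx gy (c/2) from
          vec3_eqc (by ring) (by ring) (by rw [hj] at hK; push_cast at hK; linarith)] at this
      refine ⟨gx, gy, hgc, fun hmid => ?_⟩
      have h0 := hsubL gx gy (c/2) gx gy 0 hgc hmid
      rw [show vec3 (gx-gx) (gy-gy) (c/2-0) = vec3 0 0 (c/2) from
        vec3_eqc (by ring) (by ring) (by ring)] at h0
      obtain ⟨k, hk⟩ := (hciff _).1 h0
      have hcc : c * (2*(k:ℝ)) = c * 1 := by linear_combination (-2:ℝ)*hk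
      have h2k : (2*(k:ℝ)) = 1 := mul_left_cancel₀ (ne_of_gt hcpos) hcc
      have : (2*k : ℤ) = 1 := by exact_mod_cast h2k
      omega
  -- classification of the planar sublattice
  obtain ⟨w, hw, hw0⟩ := hex 0
  have hwmem : vec3 (w 0) (w 1) (w 2) ∈ L := by rw [← vec3_eta]; exact hw
  have hw1 := hnegy _ _ _ (hnegx _ _ _ hwmem)
  have hw2 : vec3 (2 * w 0) (2 * w 1) 0 ∈ L := by
    have := hsubL _ _ _ _ _ _ hwmem hw1
    rwa [show vec3 (w 0 - -(w 0)) (w 1 - -(w 1)) (w 2 - w 2) = vec3 (2*w 0) (2*w 1) 0 from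
      vec3_eqc (by ring) (by ring) (by ring)] at this
  set x0 : ℝ := 2 * w 0 with hx0def
  set y0 : ℝ := 2 * w 1 with hy0def
  have hx0 : x0 ≠ 0 := mul_ne_zero two_ne_zero hw0
  have habs : ∀ s t : ℝ, s^2 ≤ t → |s| ≤ 1 + t := by
    intro s t h
    rcases abs_cases s with ⟨h1, _⟩ | ⟨h1, _⟩ <;> nlinarith
  have hWfin : {u : ℝ × ℝ | vec3 u.1 u.2 0 ∈ L ∧ ¬(u.1 = 0 ∧ u.2 = 0) ∧
      u.1^2 + u.2^2 ≤ x0^2 + y0^2}.Finite := by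
    apply Set.Finite.subset ((lat_finite L hL (1 + (x0^2+y0^2))).image (fun u : V3 => (u 0, u 1)))
    rintro ⟨x, y⟩ ⟨hPu, hu0, hule⟩
    refine ⟨vec3 x y 0, ⟨hPu, ?_⟩, rfl⟩
    intro i
    fin_cases i
    · simpa using habs x _ (by nlinarith [sq_nonneg y] : x^2 ≤ x0^2+y0^2)
    · simpa using habs y _ (by nlinarith [sq_nonneg x] : y^2 ≤ x0^2+y0^2)
    · simpa using (by positivity : (0:ℝ) ≤ 1 + (x0^2+y0^2))
  have hWne : (x0, y0) ∈ {u : ℝ × ℝ | vec3 u.1 u.2 0 ∈ L ∧ ¬(u.1 = 0 ∧ u.2 = 0) ∧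
      u.1^2 + u.2^2 ≤ x0^2 + y0^2} := ⟨hw2, fun hc0 => hx0 hc0.1, le_refl _⟩
  obtain ⟨u, huW, humin⟩ := Set.exists_min_image _ (fun u : ℝ × ℝ => u.1^2 + u.2^2)
    hWfin ⟨_, hWne⟩
  have hminP : ∃ p q : ℝ, vec3 p q 0 ∈ L ∧ ¬(p = 0 ∧ q = 0) ∧
      ∀ x y : ℝ, vec3 x y 0 ∈ L → ¬(x = 0 ∧ y = 0) → p^2+q^2 ≤ x^2+y^2 := by
    refine ⟨u.1, u.2, huW.1, huW.2.1, fun x y hPxy hne => ?_⟩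
    by_cases hle : x^2+y^2 ≤ x0^2+y0^2
    · exact humin (x, y) ⟨hPxy, hne, hle⟩
    · have := humin (x0, y0) hWne
      have h2 := huW.2.2
      simp only at this h2 ⊢
      linarith
  rcases plane_classify (fun x y => vec3 x y 0 ∈ L)
    (fun x y x' y' h h' => by
      have := hsubL x y 0 x' y' 0 h h'
      rwa [show vec3 (x-x') (y-y') ((0:ℝ)-0) = vec3 (x-x') (y-y') 0 from
        vec3_eqc rfl rfl (by ring)] at this)
    (fun n x y h => by
      have := hsmulL n x y 0 h
      rwa [show vec3 ((n:ℝ)*x) ((n:ℝ)*y) ((n:ℝ)*0) = vec3 ((n:ℝ)*x) ((n:ℝ)*y) 0 from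
        vec3_eqc rfl rfl (by ring)] at this)
    (fun x y h => hnegx x y 0 h)
    (fun x y h => hswap x y 0 h)
    hminP with ⟨a, ha, hP⟩ | ⟨a, ha, hP⟩
  · -- square planar lattice
    rcases hgluecase with hglue | ⟨gx, gy, hgc, hnotmid⟩
    · -- CASE 1 : primitive tetragonal, rescales to the cubic lattice
      have hchar : ∀ x y z : ℝ, vec3 x y z ∈ L ↔
          ∃ m n k : ℤ, x = a*m ∧ y = a*n ∧ z = c*k := by
        intro x y z
        constructor
        · intro h
          obtain ⟨k, hk⟩ := hglue _ _ _ h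
          obtain ⟨m, n, hm, hn⟩ := (hP x y).1 (hpl x y z k hk h)
          exact ⟨m, n, k, hm, hn, hk⟩
        · rintro ⟨m, n, k, hm, hn, hk⟩
          have h1 : vec3 (a*(m:ℝ)) (a*(n:ℝ)) 0 ∈ L := (hP _ _).2 ⟨m, n, rfl, rfl⟩
          have h2 := haddL _ _ _ _ _ _ h1 (hzk k)
          rwa [show vec3 (a*(m:ℝ)+0) (a*(n:ℝ)+0) (0 + c*(k:ℝ)) = vec3 x y z from
            vec3_eqc (by rw [hm]; ring) (by rw [hn]; ring) (by rw [hk]; ring)] at h2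
      refine ⟨a, c, ha, hcpos, ?_⟩
      have hEq : ((fun x : V3 => ![a * x 0, a * x 1, c * x 2]) ⁻¹' (L : Set V3))
          = cubicLattice := by
        ext u
        simp only [Set.mem_preimage, SetLike.mem_coe]
        constructor
        · intro h
          obtain ⟨m, n, k, hm, hn, hk⟩ := (hchar (a * u 0) (a * u 1) (c * u 2)).1 h
          refine ⟨![m, n, k], ?_⟩
          intro i
          fin_cases i
          · simpa using mul_left_cancel₀ (ne_of_gt ha) hm
          · simpa using mul_left_cancel₀ (ne_of_gt ha) hn
          · simpa using mul_left_cancel₀ (ne_of_gt hcpos) hk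
        · rintro ⟨cf, hcf⟩
          exact (hchar _ _ _).2 ⟨cf 0, cf 1, cf 2, by rw [hcf 0], by rw [hcf 1], by rw [hcf 2]⟩
      rw [hEq]
      exact Set.mem_insert _ _
    · -- CASE 2 : body-centred tetragonal, rescales to the bcc lattice
      have hg2 : vec3 (2*gx) (2*gy) 0 ∈ L := by
        have h1 := hnegy _ _ _ (hnegx _ _ _ hgc)
        have := hsubL _ _ _ _ _ _ hgc h1
        rwa [show vec3 (gx - -gx) (gy - -gy) (c/2 - c/2) = vec3 (2*gx) (2*gy) 0 from
          vec3_eqc (by ring) (by ring) (by ring)] at this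
      obtain ⟨m1, n1, hm1, hn1⟩ := (hP _ _).1 hg2
      have hgsw : vec3 (gy - gx) (gx - gy) 0 ∈ L := by
        have h1 := hswap _ _ _ hgc
        have := hsubL _ _ _ _ _ _ h1 hgc
        rwa [show vec3 (gy-gx) (gx-gy) (c/2-c/2) = vec3 (gy-gx) (gx-gy) 0 from
          vec3_eqc rfl rfl (by ring)] at this
      obtain ⟨jj, jj', hjj, hjj'⟩ := (hP _ _).1 hgsw
      have hn1m1 : n1 = m1 + 2*jj := by
        have h1 : a*(n1:ℝ) = a*((m1:ℝ) + 2*(jj:ℝ)) := by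
          linear_combination (-1)*hn1 + hm1 + 2*hjj
        have h2 := mul_left_cancel₀ (ne_of_gt ha) h1
        exact_mod_cast h2
      have hm1odd : m1 % 2 = 1 := by
        rcases Int.even_or_odd m1 with ⟨m', hm'⟩ | ⟨m', hm'⟩
        · exfalso
          apply hnotmid
          apply (hP gx gy).2
          refine ⟨m', m' + jj, ?_, ?_⟩
          · rw [hm'] at hm1; push_cast at hm1 ⊢; linarith
          · rw [hm'] at hm1; push_cast at hm1 hjj ⊢; linarith
        · omega
      have hn1odd : n1 % 2 = 1 := by omega
      have hchar : ∀ x y z : ℝ, vec3 x y z ∈ L ↔ ∃ M N K : ℤ,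
          x = (a/2)*M ∧ y = (a/2)*N ∧ z = (c/2)*K ∧ M % 2 = N % 2 ∧ N % 2 = K % 2 := by
        intro x y z
        constructor
        · intro h
          obtain ⟨K, hK⟩ := h2ziff _ _ _ h
          have hzK : z = (c/2)*K := by linarith
          rcases Int.even_or_odd K with ⟨k', hk'⟩ | ⟨k', hk'⟩
          · have hz : z = c * k' := by rw [hk'] at hK; push_cast at hK; linarith
            obtain ⟨m, n, hm, hn⟩ := (hP x y).1 (hpl x y z k' hz h)
            exact ⟨2*m, 2*n, K, by push_cast; linarith, by push_cast; linarith, hzK,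
              by omega, by omega⟩
          · have hsubg := hsubL x y z gx gy (c/2) h hgc
            have hzz : z - c/2 = c*(k':ℝ) := by rw [hk'] at hK; push_cast at hK; linarith
            obtain ⟨m, n, hm, hn⟩ := (hP _ _).1 (hpl _ _ _ k' hzz hsubg)
            exact ⟨2*m + m1, 2*n + n1, K, by push_cast; linarith,
              by push_cast; linarith, hzK, by omega, by omega⟩
        · rintro ⟨M, N, K, hxM, hyN, hzK, hp1, hp2⟩
          rcases Int.even_or_odd K with ⟨k', hk'⟩ | ⟨k', hk'⟩
          · obtain ⟨m, hm⟩ : 2 ∣ M := by omega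
            obtain ⟨n, hn⟩ : 2 ∣ N := by omega
            have h1 : vec3 (a*(m:ℝ)) (a*(n:ℝ)) 0 ∈ L := (hP _ _).2 ⟨m, n, rfl, rfl⟩
            have h2 := haddL _ _ _ _ _ _ h1 (hzk k')
            rwa [show vec3 (a*(m:ℝ)+0) (a*(n:ℝ)+0) (0+c*(k':ℝ)) = vec3 x y z from
              vec3_eqc (by rw [hxM, hm]; push_cast; ring)
                (by rw [hyN, hn]; push_cast; ring)
                (by rw [hzK, hk']; push_cast; ring)] at h2
          · obtain ⟨m, hm⟩ : 2 ∣ (M - m1) := by omega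
            obtain ⟨n, hn⟩ : 2 ∣ (N - n1) := by omega
            have h1 : vec3 (a*(m:ℝ)) (a*(n:ℝ)) 0 ∈ L := (hP _ _).2 ⟨m, n, rfl, rfl⟩
            have h2 := haddL _ _ _ _ _ _ h1 (hzk k')
            have h3 := haddL _ _ _ _ _ _ hgc h2
            have hMr : (M:ℝ) = (m1:ℝ) + 2*(m:ℝ) := by exact_mod_cast (by omega : M = m1 + 2*m)
            have hNr : (N:ℝ) = (n1:ℝ) + 2*(n:ℝ) := by exact_mod_cast (by omega : N = n1 + 2*n)
            have hKr : (K:ℝ) = 2*(k':ℝ) + 1 := by exact_mod_cast hk'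
            rwa [show vec3 (gx + (a*(m:ℝ)+0)) (gy + (a*(n:ℝ)+0)) (c/2 + (0+c*(k':ℝ)))
                = vec3 x y z from
              vec3_eqc (by rw [hxM, hMr]; linarith)
                (by rw [hyN, hNr]; linarith)
                (by rw [hzK, hKr]; ring)] at h3
      refine ⟨a/2, c/2, half_pos ha, half_pos hcpos, ?_⟩
      have hEq : ((fun x : V3 => ![(a/2) * x 0, (a/2) * x 1, (c/2) * x 2]) ⁻¹' (L : Set V3))
          = bccLattice := by
        ext u
        simp only [Set.mem_preimage, SetLike.mem_coe]
        constructor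
        · intro h
          obtain ⟨M, N, K, hm, hn, hk, hq1, hq2⟩ :=
            (hchar ((a/2) * u 0) ((a/2) * u 1) ((c/2) * u 2)).1 h
          have ha2 : (a/2) ≠ 0 := ne_of_gt (half_pos ha)
          have hc2 : (c/2) ≠ 0 := ne_of_gt (half_pos hcpos)
          refine ⟨![M, N, K], ?_, ?_⟩
          · intro i
            fin_cases i
            · simpa using mul_left_cancel₀ ha2 hm
            · simpa using mul_left_cancel₀ ha2 hn
            · simpa using mul_left_cancel₀ hc2 hk
          · intro i j
            fin_cases i <;> fin_cases j <;> simp <;> omega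
        · rintro ⟨cf, hcf, hpar⟩
          refine (hchar _ _ _).2 ⟨cf 0, cf 1, cf 2, by rw [hcf 0], by rw [hcf 1],
            by rw [hcf 2], ?_, ?_⟩
          · exact hpar 0 1
          · exact hpar 1 2
      rw [hEq]
      exact Set.mem_insert_iff.2 (Or.inr (Set.mem_insert _ _))
  · -- diamond planar lattice
    rcases hgluecase with hglue | ⟨gx, gy, hgc, hnotmid⟩
    · -- CASE 3 : rescales to ℤ(1,1,0)+ℤ(1,-1,0)+ℤ(0,0,1)
      have hchar : ∀ x y z : ℝ, vec3 x y z ∈ L ↔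
          ∃ m n k : ℤ, x = a*m ∧ y = a*n ∧ z = c*k ∧ 2 ∣ (m+n) := by
        intro x y z
        constructor
        · intro h
          obtain ⟨k, hk⟩ := hglue _ _ _ h
          obtain ⟨m, n, hm, hn, hd⟩ := (hP x y).1 (hpl x y z k hk h)
          exact ⟨m, n, k, hm, hn, hk, hd⟩
        · rintro ⟨m, n, k, hm, hn, hk, hd⟩
          have h1 : vec3 (a*(m:ℝ)) (a*(n:ℝ)) 0 ∈ L := (hP _ _).2 ⟨m, n, rfl, rfl, hd⟩
          have h2 := haddL _ _ _ _ _ _ h1 (hzk k)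
          rwa [show vec3 (a*(m:ℝ)+0) (a*(n:ℝ)+0) (0 + c*(k:ℝ)) = vec3 x y z from
            vec3_eqc (by rw [hm]; ring) (by rw [hn]; ring) (by rw [hk]; ring)] at h2
      refine ⟨a, c, ha, hcpos, ?_⟩
      have hEq : ((fun x : V3 => ![a * x 0, a * x 1, c * x 2]) ⁻¹' (L : Set V3))
          = latticeOf ![1, 1, 0] ![1, -1, 0] ![0, 0, 1] := by
        ext u
        simp only [Set.mem_preimage, SetLike.mem_coe]
        constructor
        · intro h
          obtain ⟨m, n, k, hm, hn, hk, hd⟩ := (hchar (a * u 0) (a * u 1) (c * u 2)).1 h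
          refine (lat4_mem u).2 ⟨m, n, k, ?_, ?_, ?_, hd⟩
          · exact mul_left_cancel₀ (ne_of_gt ha) hm
          · exact mul_left_cancel₀ (ne_of_gt ha) hn
          · exact mul_left_cancel₀ (ne_of_gt hcpos) hk
        · intro h
          obtain ⟨m, n, k, hm, hn, hk, hd⟩ := (lat4_mem u).1 h
          exact (hchar _ _ _).2 ⟨m, n, k, by rw [hm], by rw [hn], by rw [hk], hd⟩
      rw [hEq]
      exact Set.mem_insert_iff.2 (Or.inr (Set.mem_insert_iff.2 (Or.inr
        (Set.mem_insert_iff.2 (Or.inr rfl)))))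
    · -- CASE 4 : rescales to the fcc lattice
      have hgnx := hnegx _ _ _ hgc
      have hgx2 : vec3 (2*gx) 0 0 ∈ L := by
        have := hsubL _ _ _ _ _ _ hgc hgnx
        rwa [show vec3 (gx - -gx) (gy - gy) (c/2 - c/2) = vec3 (2*gx) 0 0 from
          vec3_eqc (by ring) (by ring) (by ring)] at this
      obtain ⟨m2, n2, hm2, hn2, hpar2⟩ := (hP _ _).1 hgx2
      have hn2z : n2 = 0 := by
        have h1 : a*(n2:ℝ) = a*((0:ℤ):ℝ) := by push_cast; linarith
        have h2 := mul_left_cancel₀ (ne_of_gt ha) h1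
        exact_mod_cast h2
      obtain ⟨m0, hm0⟩ : 2 ∣ m2 := by omega
      have hgxm0 : gx = a*(m0:ℝ) := by
        rw [hm0] at hm2; push_cast at hm2; linarith
      have hgny := hnegy _ _ _ hgc
      have hgy2 : vec3 0 (2*gy) 0 ∈ L := by
        have := hsubL _ _ _ _ _ _ hgc hgny
        rwa [show vec3 (gx - gx) (gy - -gy) (c/2 - c/2) = vec3 0 (2*gy) 0 from
          vec3_eqc (by ring) (by ring) (by ring)] at this
      obtain ⟨m3, n3, hm3, hn3, hpar3⟩ := (hP _ _).1 hgy2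
      have hm3z : m3 = 0 := by
        have h1 : a*(m3:ℝ) = a*((0:ℤ):ℝ) := by push_cast; linarith
        have h2 := mul_left_cancel₀ (ne_of_gt ha) h1
        exact_mod_cast h2
      obtain ⟨n0, hn0⟩ : 2 ∣ n3 := by omega
      have hgyn0 : gy = a*(n0:ℝ) := by
        rw [hn0] at hn3; push_cast at hn3; linarith
      have hodd : (m0 + n0) % 2 = 1 := by
        rcases Int.even_or_odd (m0 + n0) with ⟨s, hs⟩ | ⟨s, hs⟩
        · exfalso
          exact hnotmid ((hP gx gy).2 ⟨m0, n0, hgxm0, hgyn0, by omega⟩)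
        · omega
      have hchar : ∀ x y z : ℝ, vec3 x y z ∈ L ↔
          ∃ m n k : ℤ, x = a*m ∧ y = a*n ∧ z = (c/2)*k ∧ 2 ∣ (m+n+k) := by
        intro x y z
        constructor
        · intro h
          obtain ⟨K, hK⟩ := h2ziff _ _ _ h
          have hzK : z = (c/2)*K := by linarith
          rcases Int.even_or_odd K with ⟨k', hk'⟩ | ⟨k', hk'⟩
          · have hz : z = c * k' := by rw [hk'] at hK; push_cast at hK; linarith
            obtain ⟨m, n, hm, hn, hd⟩ := (hP x y).1 (hpl x y z k' hz h)
            exact ⟨m, n, K, hm, hn, hzK, by omega⟩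
          · have hsubg := hsubL x y z gx gy (c/2) h hgc
            have hzz : z - c/2 = c*(k':ℝ) := by rw [hk'] at hK; push_cast at hK; linarith
            obtain ⟨m, n, hm, hn, hd⟩ := (hP _ _).1 (hpl _ _ _ k' hzz hsubg)
            refine ⟨m0 + m, n0 + n, K, ?_, ?_, hzK, by omega⟩
            · push_cast; linarith [hgxm0]
            · push_cast; linarith [hgyn0]
        · rintro ⟨m, n, k, hm, hn, hk, hd⟩
          rcases Int.even_or_odd k with ⟨k', hk'⟩ | ⟨k', hk'⟩
          · have h1 : vec3 (a*(m:ℝ)) (a*(n:ℝ)) 0 ∈ L := (hP _ _).2 ⟨m, n, rfl, rfl, by omega⟩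
            have h2 := haddL _ _ _ _ _ _ h1 (hzk k')
            have hkr : (k:ℝ) = 2*(k':ℝ) := by exact_mod_cast (by omega : k = 2*k')
            rwa [show vec3 (a*(m:ℝ)+0) (a*(n:ℝ)+0) (0 + c*(k':ℝ)) = vec3 x y z from
              vec3_eqc (by rw [hm]; ring) (by rw [hn]; ring)
                (by rw [hk, hkr]; ring)] at h2
          · have h1 : vec3 (a*((m - m0 : ℤ):ℝ)) (a*((n - n0 : ℤ):ℝ)) 0 ∈ L :=
              (hP _ _).2 ⟨m - m0, n - n0, rfl, rfl, by omega⟩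
            have h2 := haddL _ _ _ _ _ _ h1 (hzk k')
            have h3 := haddL _ _ _ _ _ _ hgc h2
            have hkr : (k:ℝ) = 2*(k':ℝ) + 1 := by exact_mod_cast hk'
            rwa [show vec3 (gx + (a*((m - m0 : ℤ):ℝ)+0)) (gy + (a*((n - n0 : ℤ):ℝ)+0))
                (c/2 + (0+c*(k':ℝ))) = vec3 x y z from
              vec3_eqc (by rw [hm]; push_cast; linarith [hgxm0])
                (by rw [hn]; push_cast; linarith [hgyn0])
                (by rw [hk, hkr]; ring)] at h3
      refine ⟨a, c/2, ha, half_pos hcpos, ?_⟩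
      have hEq : ((fun x : V3 => ![a * x 0, a * x 1, (c/2) * x 2]) ⁻¹' (L : Set V3))
          = fccLattice := by
        ext u
        simp only [Set.mem_preimage, SetLike.mem_coe]
        constructor
        · intro h
          obtain ⟨m, n, k, hm, hn, hk, hd⟩ := (hchar (a * u 0) (a * u 1) ((c/2) * u 2)).1 h
          have hc2 : (c/2) ≠ 0 := ne_of_gt (half_pos hcpos)
          refine ⟨![m, n, k], ?_, ?_⟩
          · intro i
            fin_cases i
            · simpa using mul_left_cancel₀ (ne_of_gt ha) hm
            · simpa using mul_left_cancel₀ (ne_of_gt ha) hn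
            · simpa using mul_left_cancel₀ hc2 hk
          · simpa using hd
        · rintro ⟨cf, hcf, hdvd⟩
          refine (hchar _ _ _).2 ⟨cf 0, cf 1, cf 2, by rw [hcf 0], by rw [hcf 1],
            by rw [hcf 2], ?_⟩
          simpa using hdvd
      rw [hEq]
      exact Set.mem_insert_iff.2 (Or.inr (Set.mem_insert_iff.2 (Or.inr
        (Set.mem_insert _ _))))


end
end
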